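/- As n → ∞, the scaled third central moment E[(X_1 − μ₁(n))³]/Var(X_1)^{3/2} tends to 0 and the scaled fourth central moment E[(X_1 − μ₁(n))⁴]/Var(X_1)² tends to 3, where X_1 is the number of edges contained in a uniformly random subset of {0,1}^n. -/

import Mathlib

open Finset

def cube {n : ℕ} (w : Fin n → Option Bool) : Finset (Fin n → Bool) :=
  Finset.univ.filter fun x => ∀ i, ∀ b, w i = some b → x i = b

def Word (n r : ℕ) : Finset (Fin n → Option Bool) :=
  Finset.univ.filter fun w => (Finset.univ.filter fun i => w i = none).card = r

/-- Expectation with respect to a uniformly random subset `S ⊆ {0,1}^n`. -/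
noncomputable def Ex (n : ℕ) (f : Finset (Fin n → Bool) → ℝ) : ℝ :=
  (∑ S : Finset (Fin n → Bool), f S) / (Fintype.card (Finset (Fin n → Bool)))

/-- The number of `r`-dimensional subcubes contained in `S`. -/
def Xr (n r : ℕ) (S : Finset (Fin n → Bool)) : ℕ :=
  ((Word n r).filter fun w => cube w ⊆ S).card
noncomputable def mean1 (n : ℕ) : ℝ := Ex n (fun S => (Xr n 1 S : ℝ))

noncomputable def var1 (n : ℕ) : ℝ :=
  Ex n (fun S => ((Xr n 1 S : ℝ) - mean1 n) ^ 2)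

namespace AM

abbrev Pt (n : ℕ) := Fin n → Bool
abbrev Wd (n : ℕ) := Fin n → Option Bool

noncomputable section

variable {n : ℕ}

lemma card_finset_pt : (Fintype.card (Finset (Pt n)) : ℝ) = 2 ^ (2^n) := by
  rw [Fintype.card_finset]
  norm_num [Fintype.card_fun]

lemma card_finset_pt_pos : (0:ℝ) < (Fintype.card (Finset (Pt n)) : ℝ) := by
  rw [card_finset_pt]; positivity

lemma Ex_sum {ι : Type*} (t : Finset ι) (F : ι → Finset (Pt n) → ℝ) :
    Ex n (fun S => ∑ w ∈ t, F w S) = ∑ w ∈ t, Ex n (F w) := by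
  unfold Ex
  rw [Finset.sum_comm, Finset.sum_div]

lemma Ex_const (c : ℝ) : Ex n (fun _ => c) = c := by
  unfold Ex
  rw [Finset.sum_const, nsmul_eq_mul]
  field_simp
  rw [Finset.card_univ]; ring

lemma Ex_add (F G : Finset (Pt n) → ℝ) :
    Ex n (fun S => F S + G S) = Ex n F + Ex n G := by
  unfold Ex; rw [Finset.sum_add_distrib, add_div]

lemma Ex_sub (F G : Finset (Pt n) → ℝ) :
    Ex n (fun S => F S - G S) = Ex n F - Ex n G := by
  unfold Ex; rw [Finset.sum_sub_distrib, sub_div]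

lemma Ex_const_mul (c : ℝ) (F : Finset (Pt n) → ℝ) :
    Ex n (fun S => c * F S) = c * Ex n F := by
  unfold Ex; rw [← Finset.mul_sum, mul_div_assoc]

lemma Ex_congr {F G : Finset (Pt n) → ℝ} (h : ∀ S, F S = G S) : Ex n F = Ex n G := by
  unfold Ex; rw [Finset.sum_congr rfl (fun S _ => h S)]

lemma Ex_nonneg {F : Finset (Pt n) → ℝ} (h : ∀ S, 0 ≤ F S) : 0 ≤ Ex n F := by
  unfold Ex
  apply div_nonneg (Finset.sum_nonneg fun S _ => h S) (le_of_lt card_finset_pt_pos)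

lemma Ex_le {F : Finset (Pt n) → ℝ} (B : ℝ) (h : ∀ S, F S ≤ B) : Ex n F ≤ B := by
  unfold Ex
  rw [div_le_iff₀ card_finset_pt_pos]
  calc ∑ S : Finset (Pt n), F S ≤ ∑ _S : Finset (Pt n), B := Finset.sum_le_sum fun S _ => h S
    _ = B * (Fintype.card (Finset (Pt n)) : ℝ) := by
        rw [Finset.sum_const, nsmul_eq_mul, Finset.card_univ]; ring

lemma Ex_abs_le {F : Finset (Pt n) → ℝ} (B : ℝ) (h : ∀ S, |F S| ≤ B) : |Ex n F| ≤ B := by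
  rw [abs_le]
  constructor
  · have : -Ex n F ≤ B := by
      rw [show -Ex n F = Ex n (fun S => -F S) from by unfold Ex; rw [Finset.sum_neg_distrib, neg_div]]
      exact Ex_le B fun S => by have := (abs_le.mp (h S)).1; linarith
    linarith
  · exact Ex_le B fun S => (abs_le.mp (h S)).2

lemma Ex_ind (T : Finset (Pt n)) :
    Ex n (fun S => if T ⊆ S then (1:ℝ) else 0) = ((2:ℝ) ^ T.card)⁻¹ := by
  have h1 : (∑ S : Finset (Pt n), if T ⊆ S then (1:ℝ) else 0)
      = ((Finset.univ.filter fun S : Finset (Pt n) => T ⊆ S).card : ℝ) := by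
    rw [Finset.card_filter]; push_cast; rfl
  have h2 : (Finset.univ.filter fun S : Finset (Pt n) => T ⊆ S) = Finset.Icc T Finset.univ := by
    ext S; simp [Finset.mem_Icc]
  have h3 : (Finset.Icc T (Finset.univ : Finset (Pt n))).card
      = 2 ^ ((Finset.univ : Finset (Pt n)).card - T.card) :=
    Finset.card_Icc_finset (Finset.subset_univ T)
  unfold Ex
  rw [h1, h2, h3, card_finset_pt]
  have hle : T.card ≤ 2^n := by
    have := Finset.card_le_univ T
    simpa [Finset.card_univ, Fintype.card_fun] using this
  rw [Finset.card_univ]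
  have : (Fintype.card (Pt n)) = 2^n := by simp [Fintype.card_fun]
  rw [this]
  push_cast
  rw [pow_sub₀ (2:ℝ) (by norm_num) hle]
  field_simp


def Meas (A : Finset (Pt n)) (F : Finset (Pt n) → ℝ) : Prop := ∀ S, F (S ∩ A) = F S

lemma Meas.mul {A B : Finset (Pt n)} {F G : Finset (Pt n) → ℝ}
    (hF : Meas A F) (hG : Meas B G) : Meas (A ∪ B) (fun S => F S * G S) := by
  intro S
  have h1 : S ∩ (A ∪ B) ∩ A = S ∩ A := by
    rw [Finset.inter_assoc, Finset.union_inter_cancel_left]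
  have h2 : S ∩ (A ∪ B) ∩ B = S ∩ B := by
    rw [Finset.inter_assoc, Finset.union_inter_cancel_right]
  dsimp only
  rw [← hF (S ∩ (A ∪ B)), ← hG (S ∩ (A ∪ B)), h1, h2, hF S, hG S]

lemma union_inter_left {A : Finset (Pt n)} {P R : Finset (Pt n)}
    (hP : P ⊆ A) (hR : R ⊆ Aᶜ) : (P ∪ R) ∩ A = P := by
  rw [Finset.union_inter_distrib_right]
  have : R ∩ A = ∅ := by
    apply Finset.eq_empty_of_forall_notMem
    intro x hx
    rcases Finset.mem_inter.mp hx with ⟨hx2, hxA⟩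
    exact (Finset.mem_compl.mp (hR hx2)) hxA
  rw [this, Finset.union_empty, Finset.inter_eq_left.mpr hP]

lemma inter_union_sdiff' (S A : Finset (Pt n)) : (S ∩ A) ∪ (S \ A) = S := by
  ext x; simp only [Finset.mem_union, Finset.mem_inter, Finset.mem_sdiff]; tauto

lemma sum_restrict (A : Finset (Pt n)) (h : Finset (Pt n) → ℝ) :
    ∑ S : Finset (Pt n), h (S ∩ A)
      = 2 ^ (2^n - A.card) * ∑ P ∈ A.powerset, h P := by
  have key : ∑ S : Finset (Pt n), h (S ∩ A)
      = ∑ p ∈ A.powerset ×ˢ Aᶜ.powerset, h ((p.1 ∪ p.2) ∩ A) := by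
    apply Finset.sum_nbij' (fun S => (S ∩ A, S \ A)) (fun p => p.1 ∪ p.2)
    · intro S _
      simp only [Finset.mem_product, Finset.mem_powerset]
      refine ⟨Finset.inter_subset_right, fun x hx => ?_⟩
      simp only [Finset.mem_compl]
      exact (Finset.mem_sdiff.mp hx).2
    · intro p _; exact Finset.mem_univ _
    · intro S _
      exact inter_union_sdiff' S A
    · intro p hp
      simp only [Finset.mem_product, Finset.mem_powerset] at hp
      have h1 : (p.1 ∪ p.2) ∩ A = p.1 := union_inter_left hp.1 hp.2
      have h2 : (p.1 ∪ p.2) \ A = p.2 := by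
        rw [Finset.union_sdiff_distrib]
        have ha : p.1 \ A = ∅ := by
          rw [Finset.sdiff_eq_empty_iff_subset]; exact hp.1
        have hb : p.2 \ A = p.2 := by
          apply Finset.sdiff_eq_self_of_disjoint
          exact Finset.disjoint_left.mpr fun x hx2 => Finset.mem_compl.mp (hp.2 hx2)
        rw [ha, hb, Finset.empty_union]
      exact Prod.ext h1 h2
    · intro S _
      rw [inter_union_sdiff' S A]
  rw [key, Finset.sum_product]
  have step : ∀ P ∈ A.powerset, ∑ R ∈ Aᶜ.powerset, h ((P ∪ R) ∩ A)
      = (2:ℝ) ^ (2^n - A.card) * h P := by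
    intro P hP
    rw [Finset.mem_powerset] at hP
    have : ∀ R ∈ Aᶜ.powerset, h ((P ∪ R) ∩ A) = h P := by
      intro R hR
      rw [Finset.mem_powerset] at hR
      rw [union_inter_left hP hR]
    rw [Finset.sum_congr rfl this, Finset.sum_const, nsmul_eq_mul,
      Finset.card_powerset, Finset.card_compl]
    congr 2
    · push_cast [Finset.card_univ]
      norm_num [Fintype.card_fun]
  rw [Finset.sum_congr rfl step, ← Finset.mul_sum]

lemma indep {A B : Finset (Pt n)} {F G : Finset (Pt n) → ℝ}
    (hD : Disjoint A B) (hF : Meas A F) (hG : Meas B G) :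
    Ex n (fun S => F S * G S) = Ex n F * Ex n G := by
  have hExF : Ex n F = 2 ^ (2^n - A.card) * (∑ P ∈ A.powerset, F P) / 2 ^ (2^n) := by
    unfold Ex
    rw [← Finset.sum_congr rfl (fun S _ => hF S), sum_restrict, card_finset_pt]
  have hExG : Ex n G = 2 ^ (2^n - B.card) * (∑ P ∈ B.powerset, G P) / 2 ^ (2^n) := by
    unfold Ex
    rw [← Finset.sum_congr rfl (fun S _ => hG S), sum_restrict, card_finset_pt]
  have hmeas : Meas (A ∪ B) (fun S => F S * G S) := hF.mul hG
  have hExFG : Ex n (fun S => F S * G S)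
      = 2 ^ (2^n - (A ∪ B).card) * (∑ P ∈ (A ∪ B).powerset, F P * G P) / 2 ^ (2^n) := by
    have e1 : (∑ S : Finset (Pt n), F S * G S)
        = ∑ S : Finset (Pt n), (fun T => F T * G T) (S ∩ (A ∪ B)) :=
      Finset.sum_congr rfl fun S _ => (hmeas S).symm
    unfold Ex
    rw [card_finset_pt]
    congr 1
    exact e1.trans (sum_restrict (A ∪ B) (fun T => F T * G T))
  have hsplit : ∑ P ∈ (A ∪ B).powerset, F P * G P
      = (∑ P ∈ A.powerset, F P) * (∑ Q ∈ B.powerset, G Q) := by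
    rw [Finset.sum_mul_sum, ← Finset.sum_product']
    apply Finset.sum_nbij' (fun T => (T ∩ A, T ∩ B)) (fun p => p.1 ∪ p.2)
    · intro T _
      simp only [Finset.mem_product, Finset.mem_powerset]
      exact ⟨Finset.inter_subset_right, Finset.inter_subset_right⟩
    · intro p hp
      simp only [Finset.mem_product, Finset.mem_powerset] at hp ⊢
      exact Finset.union_subset (hp.1.trans Finset.subset_union_left)
        (hp.2.trans Finset.subset_union_right)
    · intro T hT
      rw [Finset.mem_powerset] at hT
      simp only
      rw [← Finset.inter_union_distrib_left, Finset.inter_eq_left.mpr hT]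
    · intro p hp
      simp only [Finset.mem_product, Finset.mem_powerset] at hp
      have h1 : (p.1 ∪ p.2) ∩ A = p.1 := by
        rw [Finset.union_inter_distrib_right, Finset.inter_eq_left.mpr hp.1]
        have : p.2 ∩ A = ∅ := by
          apply Finset.eq_empty_of_forall_notMem
          intro x hx
          rcases Finset.mem_inter.mp hx with ⟨hx2, hxA⟩
          exact (Finset.disjoint_left.mp hD) hxA (hp.2 hx2)
        rw [this, Finset.union_empty]
      have h2 : (p.1 ∪ p.2) ∩ B = p.2 := by
        rw [Finset.union_inter_distrib_right, Finset.inter_eq_left.mpr hp.2]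
        have : p.1 ∩ B = ∅ := by
          apply Finset.eq_empty_of_forall_notMem
          intro x hx
          rcases Finset.mem_inter.mp hx with ⟨hx1, hxB⟩
          exact (Finset.disjoint_left.mp hD) (hp.1 hx1) hxB
        rw [this, Finset.empty_union]
      exact Prod.ext h1 h2
    · intro T hT
      rw [hF T, hG T]
  have hab : (A ∪ B).card = A.card + B.card := Finset.card_union_of_disjoint hD
  have hleA : A.card ≤ 2^n := by
    have := Finset.card_le_univ A
    simpa [Finset.card_univ, Fintype.card_fun] using this
  have hleB : B.card ≤ 2^n := by
    have := Finset.card_le_univ B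
    simpa [Finset.card_univ, Fintype.card_fun] using this
  have hleAB : A.card + B.card ≤ 2^n := by
    have := Finset.card_le_univ (A ∪ B)
    rw [hab] at this
    simpa [Finset.card_univ, Fintype.card_fun] using this
  rw [hExFG, hExF, hExG, hsplit, hab,
    pow_sub₀ (2:ℝ) (by norm_num) hleA, pow_sub₀ (2:ℝ) (by norm_num) hleB,
    pow_sub₀ (2:ℝ) (by norm_num) hleAB, pow_add]
  have h2 : (2:ℝ) ^ (2^n) ≠ 0 := by positivity
  field_simp

lemma mem_cube {x : Pt n} {w : Wd n} : x ∈ cube w ↔ ∀ i b, w i = some b → x i = b := by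
  simp [cube]

lemma none_unique {w : Wd n} (hW : w ∈ Word n 1) {i : Fin n} (hi : w i = none) :
    ∀ k, k ≠ i → w k ≠ none := by
  have hc : (Finset.univ.filter fun j => w j = none).card = 1 := by
    simpa [Word] using hW
  obtain ⟨i0, hi0⟩ := Finset.card_eq_one.mp hc
  have hii0 : i = i0 := by
    have : i ∈ ({i0} : Finset (Fin n)) := hi0 ▸ (Finset.mem_filter.mpr ⟨Finset.mem_univ _, hi⟩)
    simpa using this
  intro k hk hnone
  have : k ∈ ({i0} : Finset (Fin n)) := hi0 ▸ (Finset.mem_filter.mpr ⟨Finset.mem_univ _, hnone⟩)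
  simp at this
  exact hk (this.trans hii0.symm)

lemma word1_spec {w : Wd n} (hW : w ∈ Word n 1) :
    ∃ i, w i = none ∧ ∀ k, k ≠ i → w k ≠ none := by
  have hc : (Finset.univ.filter fun j => w j = none).card = 1 := by
    simpa [Word] using hW
  obtain ⟨i0, hi0⟩ := Finset.card_eq_one.mp hc
  have hi : w i0 = none := by
    have : i0 ∈ Finset.univ.filter fun j => w j = none := by rw [hi0]; simp
    exact (Finset.mem_filter.mp this).2
  exact ⟨i0, hi, none_unique hW hi⟩

lemma cube_pair {w : Wd n} (hW : w ∈ Word n 1) :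
    ∃ x y : Pt n, x ≠ y ∧ cube w = {x, y} := by
  obtain ⟨i, hi, huniq⟩ := word1_spec hW
  refine ⟨(fun k => if k = i then false else (w k).getD false),
    (fun k => if k = i then true else (w k).getD false), ?_, ?_⟩
  · intro h
    have h0 := congrFun h i
    simp at h0
  · ext z
    simp only [Finset.mem_insert, Finset.mem_singleton]
    rw [mem_cube]
    constructor
    · intro hz
      have key : ∀ (b : Bool), z i = b → z = (fun k => if k = i then b else (w k).getD false) := by
        intro b hb
        funext k
        by_cases hk : k = i
        · subst hk; simpa using hb
        · simp only [if_neg hk]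
          cases hwk : w k with
          | none => exact absurd hwk (huniq k hk)
          | some c => rw [hz k c hwk]; rfl
      cases hzi : z i with
      | false => exact Or.inl (key false hzi)
      | true => exact Or.inr (key true hzi)
    · intro hz k b hkb
      have hki : k ≠ i := by
        intro h; subst h; rw [hi] at hkb; cases hkb
      rcases hz with h | h <;>
        (subst h; simp only [if_neg hki]; rw [hkb]; rfl)

lemma cube_card {w : Wd n} (hW : w ∈ Word n 1) : (cube w).card = 2 := by
  obtain ⟨x, y, hxy, hp⟩ := cube_pair hW
  rw [hp, Finset.card_pair hxy]

def edge (v : Pt n) (i : Fin n) : Wd n := fun k => if k = i then none else some (v k)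

lemma edge_mem (v : Pt n) (i : Fin n) : edge v i ∈ Word n 1 := by
  simp only [Word, Finset.mem_filter, Finset.mem_univ, true_and]
  have : (Finset.univ.filter fun k => edge v i k = none) = {i} := by
    ext k
    simp only [Finset.mem_filter, Finset.mem_univ, true_and, Finset.mem_singleton, edge]
    by_cases hk : k = i <;> simp [hk]
  rw [this, Finset.card_singleton]

lemma mem_cube_edge (v : Pt n) (i : Fin n) : v ∈ cube (edge v i) := by
  rw [mem_cube]
  intro k b hkb
  simp only [edge] at hkb
  by_cases hk : k = i
  · rw [if_pos hk] at hkb; cases hkb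
  · rw [if_neg hk] at hkb
    exact Option.some_injective _ hkb

lemma edge_eq {v v' : Pt n} {i i' : Fin n} (h : edge v i = edge v' i') :
    i = i' ∧ ∀ k, k ≠ i → v k = v' k := by
  have hii : i = i' := by
    by_contra hne
    have h0 := congrFun h i
    simp [edge, hne] at h0
  refine ⟨hii, fun k hk => ?_⟩
  have h0 := congrFun h k
  rw [← hii] at h0
  simp only [edge, if_neg hk] at h0
  exact Option.some_injective _ h0

lemma card_vertexE (x : Pt n) : ((Word n 1).filter fun w => x ∈ cube w).card ≤ n := by
  classical
  have hsub : ((Word n 1).filter fun w => x ∈ cube w) ⊆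
      Finset.univ.biUnion (fun i : Fin n =>
        (Word n 1).filter fun w => w i = none ∧ x ∈ cube w) := by
    intro w hw
    rcases Finset.mem_filter.mp hw with ⟨hW, hx⟩
    obtain ⟨i, hi, _⟩ := word1_spec hW
    exact Finset.mem_biUnion.mpr ⟨i, Finset.mem_univ _,
      Finset.mem_filter.mpr ⟨hW, hi, hx⟩⟩
  have hone : ∀ i : Fin n,
      ((Word n 1).filter fun w => w i = none ∧ x ∈ cube w).card ≤ 1 := by
    intro i
    rw [Finset.card_le_one]
    intro w hw w' hw'
    rcases Finset.mem_filter.mp hw with ⟨hW, hnone, hx⟩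
    rcases Finset.mem_filter.mp hw' with ⟨hW', hnone', hx'⟩
    funext k
    by_cases hk : k = i
    · subst hk; rw [hnone, hnone']
    · cases hwk : w k with
      | none => exact absurd hwk (none_unique hW hnone k hk)
      | some c =>
        cases hwk' : w' k with
        | none => exact absurd hwk' (none_unique hW' hnone' k hk)
        | some c' =>
          rw [mem_cube] at hx hx'
          rw [← hx k c hwk, ← hx' k c' hwk']
  calc ((Word n 1).filter fun w => x ∈ cube w).card
      ≤ (Finset.univ.biUnion (fun i : Fin n =>
          (Word n 1).filter fun w => w i = none ∧ x ∈ cube w)).card :=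
        Finset.card_le_card hsub
    _ ≤ ∑ i : Fin n, ((Word n 1).filter fun w => w i = none ∧ x ∈ cube w).card :=
        Finset.card_biUnion_le
    _ ≤ ∑ _i : Fin n, 1 := Finset.sum_le_sum fun i _ => hone i
    _ = n := by simp

lemma nbr_card {w : Wd n} (hW : w ∈ Word n 1) :
    ((Word n 1).filter fun w' => ¬ Disjoint (cube w) (cube w')).card ≤ 2 * n := by
  classical
  obtain ⟨x, y, hxy, hp⟩ := cube_pair hW
  have hsub : ((Word n 1).filter fun w' => ¬ Disjoint (cube w) (cube w')) ⊆
      ((Word n 1).filter fun w' => x ∈ cube w') ∪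
      ((Word n 1).filter fun w' => y ∈ cube w') := by
    intro w' hw'
    rcases Finset.mem_filter.mp hw' with ⟨hW', hnd⟩
    obtain ⟨z, hz1, hz2⟩ := Finset.not_disjoint_iff.mp hnd
    rw [hp] at hz1
    simp only [Finset.mem_insert, Finset.mem_singleton] at hz1
    rcases hz1 with h | h
    · exact Finset.mem_union_left _ (Finset.mem_filter.mpr ⟨hW', h ▸ hz2⟩)
    · exact Finset.mem_union_right _ (Finset.mem_filter.mpr ⟨hW', h ▸ hz2⟩)
  calc ((Word n 1).filter fun w' => ¬ Disjoint (cube w) (cube w')).card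
      ≤ _ := Finset.card_le_card hsub
    _ ≤ ((Word n 1).filter fun w' => x ∈ cube w').card
        + ((Word n 1).filter fun w' => y ∈ cube w').card := Finset.card_union_le _ _
    _ ≤ n + n := Nat.add_le_add (card_vertexE x) (card_vertexE y)
    _ = 2 * n := by omega

lemma W_card_le : (Word n 1).card ≤ n * 2^n := by
  classical
  have hsub : (Word n 1) ⊆ Finset.univ.biUnion (fun i : Fin n =>
      (Word n 1).filter fun w => w i = none) := by
    intro w hw
    obtain ⟨i, hi, _⟩ := word1_spec hw
    exact Finset.mem_biUnion.mpr ⟨i, Finset.mem_univ _, Finset.mem_filter.mpr ⟨hw, hi⟩⟩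
  have hbound : ∀ i : Fin n, ((Word n 1).filter fun w => w i = none).card ≤ 2^n := by
    intro i
    have : ((Word n 1).filter fun w => w i = none).card
        ≤ (Finset.univ : Finset (Pt n)).card := by
      apply Finset.card_le_card_of_injOn (fun w => fun k => (w k).getD false)
      · intro w _; exact Finset.mem_univ _
      · intro w hw w' hw' himg
        rcases Finset.mem_filter.mp (Finset.mem_coe.mp hw) with ⟨hW, hnone⟩
        rcases Finset.mem_filter.mp (Finset.mem_coe.mp hw') with ⟨hW', hnone'⟩
        funext k
        by_cases hk : k = i
        · subst hk; rw [hnone, hnone']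
        · cases hwk : w k with
          | none => exact absurd hwk (none_unique hW hnone k hk)
          | some c =>
            cases hwk' : w' k with
            | none => exact absurd hwk' (none_unique hW' hnone' k hk)
            | some c' =>
              have hkk := congrFun himg k
              simp only [hwk, hwk', Option.getD_some] at hkk
              rw [hkk]
    simpa [Finset.card_univ, Fintype.card_fun] using this
  calc (Word n 1).card ≤ _ := Finset.card_le_card hsub
    _ ≤ ∑ i : Fin n, ((Word n 1).filter fun w => w i = none).card := Finset.card_biUnion_le
    _ ≤ ∑ _i : Fin n, 2^n := Finset.sum_le_sum fun i _ => hbound i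
    _ = n * 2^n := by simp [Finset.sum_const, mul_comm]

def dp (w w' : Wd n) : Prop := ¬ Disjoint (cube w) (cube w')

instance {w w' : Wd n} : Decidable (dp w w') := by unfold dp; infer_instance

lemma dp_symm {w w' : Wd n} : dp w w' ↔ dp w' w := by
  unfold dp; rw [disjoint_comm]

def Ind (P : Prop) [Decidable P] : ℝ := if P then 1 else 0

lemma Ind_nonneg {P : Prop} [Decidable P] : 0 ≤ Ind P := by
  unfold Ind; split <;> norm_num

lemma Ind_le_one {P : Prop} [Decidable P] : Ind P ≤ 1 := by
  unfold Ind; split <;> norm_num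

lemma Ind_of_true {P : Prop} [Decidable P] (h : P) : Ind P = 1 := by simp [Ind, h]

lemma Ind_congr {P Q : Prop} [Decidable P] [Decidable Q] (h : P ↔ Q) : Ind P = Ind Q := by
  simp only [Ind]; split_ifs with h1 h2 <;> tauto

lemma nbr_sum {w : Wd n} (hW : w ∈ Word n 1) :
    ∑ w' ∈ Word n 1, Ind (dp w w') ≤ 2 * (n:ℝ) := by
  have h1 : ∑ w' ∈ Word n 1, Ind (dp w w')
      = (((Word n 1).filter fun w' => dp w w').card : ℝ) := by
    rw [Finset.card_filter]
    push_cast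
    simp [Ind]
  rw [h1]
  have := nbr_card hW
  calc (((Word n 1).filter fun w' => dp w w').card : ℝ)
      ≤ ((2 * n : ℕ) : ℝ) := by exact_mod_cast this
    _ = 2 * (n:ℝ) := by push_cast; ring

lemma W_sum_one : ∑ _w ∈ Word n 1, (1:ℝ) ≤ (n:ℝ) * 2^n := by
  rw [Finset.sum_const, nsmul_eq_mul, mul_one]
  calc ((Word n 1).card : ℝ) ≤ ((n * 2^n : ℕ) : ℝ) := by exact_mod_cast W_card_le
    _ = (n:ℝ) * 2^n := by push_cast; ring

/-! ### Indicators and centered variables -/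

def fI (w : Wd n) (S : Finset (Pt n)) : ℝ := if cube w ⊆ S then 1 else 0

lemma meas_fI (w : Wd n) : Meas (cube w) (fI w) := by
  intro S
  simp [fI, Finset.subset_inter_iff]

def Yc (w : Wd n) (S : Finset (Pt n)) : ℝ := fI w S - Ex n (fI w)

lemma meas_Yc (w : Wd n) : Meas (cube w) (Yc w) := by
  intro S; unfold Yc; rw [meas_fI w S]

lemma Ex_fI (w : Wd n) : Ex n (fI w) = ((2:ℝ) ^ (cube w).card)⁻¹ := Ex_ind (cube w)

lemma Ex_sub_const (F : Finset (Pt n) → ℝ) (c : ℝ) :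
    Ex n (fun S => F S - c) = Ex n F - c := by
  have h := Ex_sub F (fun _ => c)
  rw [Ex_const] at h
  exact h

lemma Ex_Yc (w : Wd n) : Ex n (Yc w) = 0 := by
  have h : Ex n (Yc w) = Ex n (fI w) - Ex n (fI w) := Ex_sub_const (fI w) (Ex n (fI w))
  rw [h, sub_self]

lemma fI_nonneg (w : Wd n) (S : Finset (Pt n)) : 0 ≤ fI w S := by
  unfold fI; split <;> norm_num

lemma fI_le_one (w : Wd n) (S : Finset (Pt n)) : fI w S ≤ 1 := by
  unfold fI; split <;> norm_num

lemma Yc_abs_le (w : Wd n) (S : Finset (Pt n)) : |Yc w S| ≤ 1 := by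
  have h1 : 0 ≤ Ex n (fI w) := Ex_nonneg (fun T => fI_nonneg w T)
  have h2 : Ex n (fI w) ≤ 1 := Ex_le 1 (fun T => fI_le_one w T)
  have h3 := fI_nonneg w S
  have h4 := fI_le_one w S
  unfold Yc
  rw [abs_le]
  constructor <;> linarith

def ee (w w' : Wd n) : ℝ := Ex n (fun S => Yc w S * Yc w' S)

lemma ee_abs_le (w w' : Wd n) : |ee w w'| ≤ 1 :=
  Ex_abs_le 1 fun S => by
    rw [abs_mul]
    exact mul_le_one₀ (Yc_abs_le w S) (abs_nonneg _) (Yc_abs_le w' S)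

lemma ee_zero {w w' : Wd n} (h : Disjoint (cube w) (cube w')) : ee w w' = 0 := by
  unfold ee
  rw [indep h (meas_Yc w) (meas_Yc w'), Ex_Yc, zero_mul]

lemma fI_mul (w w' : Wd n) (S : Finset (Pt n)) :
    fI w S * fI w' S = if cube w ∪ cube w' ⊆ S then 1 else 0 := by
  unfold fI
  by_cases h : cube w ⊆ S <;> by_cases h' : cube w' ⊆ S <;>
    simp [h, h', Finset.union_subset_iff]

lemma Ex_comb (F G H : Finset (Pt n) → ℝ) (c1 c2 c3 : ℝ) :
    Ex n (fun S => F S - c1 * G S - c2 * H S + c3)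
      = Ex n F - c1 * Ex n G - c2 * Ex n H + c3 := by
  unfold Ex
  rw [Finset.sum_add_distrib, Finset.sum_sub_distrib, Finset.sum_sub_distrib,
    ← Finset.mul_sum, ← Finset.mul_sum, Finset.sum_const, nsmul_eq_mul]
  have hc := @card_finset_pt_pos n
  field_simp
  rw [Finset.card_univ]
  ring

lemma ee_formula (w w' : Wd n) : ee w w'
    = ((2:ℝ) ^ (cube w ∪ cube w').card)⁻¹
      - ((2:ℝ) ^ (cube w).card)⁻¹ * ((2:ℝ) ^ (cube w').card)⁻¹ := by
  have hpt : ∀ S, Yc w S * Yc w' S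
      = (if cube w ∪ cube w' ⊆ S then (1:ℝ) else 0)
        - Ex n (fI w') * fI w S - Ex n (fI w) * fI w' S
        + Ex n (fI w) * Ex n (fI w') := by
    intro S
    rw [← fI_mul]
    unfold Yc
    ring
  unfold ee
  rw [Ex_congr hpt, Ex_comb, Ex_ind, Ex_fI, Ex_fI]
  ring

lemma ee_nonneg (w w' : Wd n) : 0 ≤ ee w w' := by
  rw [ee_formula]
  have h1 : (cube w ∪ cube w').card ≤ (cube w).card + (cube w').card :=
    Finset.card_union_le _ _
  have h2 : (2:ℝ) ^ (cube w ∪ cube w').card ≤ 2 ^ ((cube w).card + (cube w').card) :=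
    pow_le_pow_right₀ one_le_two h1
  have h3 : (0:ℝ) < 2 ^ (cube w ∪ cube w').card := pow_pos (by norm_num) _
  have h4 : (0:ℝ) < 2 ^ ((cube w).card + (cube w').card) := pow_pos (by norm_num) _
  have h5 : ((2:ℝ) ^ ((cube w).card + (cube w').card))⁻¹
      ≤ ((2:ℝ) ^ (cube w ∪ cube w').card)⁻¹ := by
    apply inv_anti₀ h3 h2
  rw [pow_add, mul_inv] at h5
  linarith

lemma ee_ge_sixteenth {w w' : Wd n} (hW : w ∈ Word n 1) (hW' : w' ∈ Word n 1)
    (hnd : ¬ Disjoint (cube w) (cube w')) : 1/16 ≤ ee w w' := by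
  rw [ee_formula, cube_card hW, cube_card hW']
  have hu : (cube w ∪ cube w').card ≤ 3 := by
    have h1 := Finset.card_union_add_card_inter (cube w) (cube w')
    have h2 : 1 ≤ (cube w ∩ cube w').card :=
      Finset.card_pos.mpr (Finset.not_disjoint_iff_nonempty_inter.mp hnd)
    rw [cube_card hW, cube_card hW'] at h1
    omega
  have h3 : (2:ℝ) ^ (cube w ∪ cube w').card ≤ 8 := by
    calc (2:ℝ) ^ (cube w ∪ cube w').card ≤ 2 ^ 3 := pow_le_pow_right₀ one_le_two hu
      _ = 8 := by norm_num
  have h4 : (0:ℝ) < 2 ^ (cube w ∪ cube w').card := pow_pos (by norm_num) _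
  have h5 : (8:ℝ)⁻¹ ≤ ((2:ℝ) ^ (cube w ∪ cube w').card)⁻¹ := inv_anti₀ h4 h3
  have h6 : ((2:ℝ)^2)⁻¹ * ((2:ℝ)^2)⁻¹ = 1/16 := by norm_num
  rw [h6]
  have h7 : (8:ℝ)⁻¹ = 1/8 := by norm_num
  linarith

/-! ### Moment representations -/

lemma X_sub_mean (S : Finset (Pt n)) :
    (Xr n 1 S : ℝ) - mean1 n = ∑ w ∈ Word n 1, Yc w S := by
  have hX : ∀ T : Finset (Pt n), (Xr n 1 T : ℝ) = ∑ w ∈ Word n 1, fI w T := by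
    intro T
    unfold Xr fI
    rw [Finset.card_filter]
    push_cast
    rfl
  have hm : mean1 n = ∑ w ∈ Word n 1, Ex n (fI w) := by
    unfold mean1
    rw [Ex_congr hX, Ex_sum]
  rw [hX, hm, ← Finset.sum_sub_distrib]
  rfl

lemma var1_eq : var1 n = ∑ w ∈ Word n 1, ∑ w' ∈ Word n 1, ee w w' := by
  unfold var1
  have h : ∀ S : Finset (Pt n), ((Xr n 1 S : ℝ) - mean1 n)^2
      = ∑ w ∈ Word n 1, ∑ w' ∈ Word n 1, Yc w S * Yc w' S := by
    intro S
    rw [X_sub_mean, sq, Finset.sum_mul_sum]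
  rw [Ex_congr h, Ex_sum]
  exact Finset.sum_congr rfl fun w _ => Ex_sum _ _

lemma var1_ge : (n:ℝ) * ((n:ℝ) - 1) * 2^n / 16 ≤ var1 n := by
  classical
  rw [var1_eq, ← Finset.sum_product']
  have hinj : Set.InjOn (fun p : Pt n × (Fin n × Fin n) => (edge p.1 p.2.1, edge p.1 p.2.2))
      ((Finset.univ ×ˢ (Finset.univ : Finset (Fin n)).offDiag : Finset (Pt n × (Fin n × Fin n)))) := by
    intro p hp q hq heq
    simp only [Prod.mk.injEq] at heq
    obtain ⟨h1, h2⟩ := heq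
    obtain ⟨hi1, hv1⟩ := edge_eq h1
    obtain ⟨hi2, hv2⟩ := edge_eq h2
    have hne : p.2.1 ≠ p.2.2 := by
      have hmem := (Finset.mem_product.mp (Finset.mem_coe.mp hp)).2
      exact (Finset.mem_offDiag.mp hmem).2.2
    have hvv : p.1 = q.1 := by
      funext k
      by_cases hk1 : k = p.2.1
      · have hk2 : k ≠ p.2.2 := by rw [hk1]; exact hne
        exact hv2 k hk2
      · exact hv1 k hk1
    exact Prod.ext hvv (Prod.ext hi1 hi2)
  set Φ : Finset (Pt n × (Fin n × Fin n)) := Finset.univ ×ˢ (Finset.univ : Finset (Fin n)).offDiag with hΦ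
  set φ : Pt n × (Fin n × Fin n) → Wd n × Wd n := fun p => (edge p.1 p.2.1, edge p.1 p.2.2) with hφ
  have himg : Φ.image φ ⊆ (Word n 1) ×ˢ (Word n 1) := by
    intro q hq
    obtain ⟨p, hp, rfl⟩ := Finset.mem_image.mp hq
    exact Finset.mem_product.mpr ⟨edge_mem _ _, edge_mem _ _⟩
  have hterm : ∀ q ∈ Φ.image φ, (1:ℝ)/16 ≤ ee q.1 q.2 := by
    intro q hq
    obtain ⟨p, hp, rfl⟩ := Finset.mem_image.mp hq
    apply ee_ge_sixteenth (edge_mem _ _) (edge_mem _ _)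
    exact Finset.not_disjoint_iff.mpr ⟨p.1, mem_cube_edge _ _, mem_cube_edge _ _⟩
  have hcard : (Φ.image φ).card = 2^n * (n*n - n) := by
    rw [Finset.card_image_of_injOn hinj, hΦ, Finset.card_product, Finset.offDiag_card]
    congr 1
    · simp [Finset.card_univ, Fintype.card_fun]
    · simp [Finset.card_univ]
  calc (n:ℝ) * ((n:ℝ) - 1) * 2^n / 16
      ≤ ((Φ.image φ).card : ℝ) * (1/16) := by
        apply le_of_eq
        rw [hcard]
        have hnn : n ≤ n * n := by nlinarith
        push_cast [Nat.cast_sub hnn]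
        ring
    _ ≤ ∑ q ∈ Φ.image φ, ee q.1 q.2 := by
        have := Finset.card_nsmul_le_sum (Φ.image φ) (fun q => ee q.1 q.2) (1/16) hterm
        rw [nsmul_eq_mul] at this
        exact this
    _ ≤ ∑ q ∈ (Word n 1) ×ˢ (Word n 1), ee q.1 q.2 :=
        Finset.sum_le_sum_of_subset_of_nonneg himg (fun q _ _ => ee_nonneg q.1 q.2)

/-! ### Third moment -/

def g3 (a b c : Wd n) : ℝ := Ex n (fun S => Yc a S * Yc b S * Yc c S)

lemma g3_abs_le (a b c : Wd n) : |g3 a b c| ≤ 1 :=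
  Ex_abs_le 1 fun S => by
    rw [abs_mul, abs_mul]
    exact mul_le_one₀ (mul_le_one₀ (Yc_abs_le a S) (abs_nonneg _) (Yc_abs_le b S))
      (abs_nonneg _) (Yc_abs_le c S)

lemma mu3_eq : Ex n (fun S => ((Xr n 1 S : ℝ) - mean1 n)^3)
    = ∑ a ∈ Word n 1, ∑ b ∈ Word n 1, ∑ c ∈ Word n 1, g3 a b c := by
  have h : ∀ S : Finset (Pt n), ((Xr n 1 S : ℝ) - mean1 n)^3
      = ∑ a ∈ Word n 1, ∑ b ∈ Word n 1, ∑ c ∈ Word n 1, Yc a S * Yc b S * Yc c S := by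
    intro S
    rw [X_sub_mean]
    calc (∑ w ∈ Word n 1, Yc w S)^3
        = (∑ a ∈ Word n 1, Yc a S) * (∑ b ∈ Word n 1, Yc b S) * (∑ c ∈ Word n 1, Yc c S) := by
          ring
      _ = ∑ c ∈ Word n 1, ∑ b ∈ Word n 1, ∑ a ∈ Word n 1, Yc a S * Yc b S * Yc c S := by
          simp only [Finset.sum_mul, Finset.mul_sum]
      _ = ∑ b ∈ Word n 1, ∑ c ∈ Word n 1, ∑ a ∈ Word n 1, Yc a S * Yc b S * Yc c S :=
          Finset.sum_comm
      _ = ∑ b ∈ Word n 1, ∑ a ∈ Word n 1, ∑ c ∈ Word n 1, Yc a S * Yc b S * Yc c S :=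
          Finset.sum_congr rfl fun b _ => Finset.sum_comm
      _ = ∑ a ∈ Word n 1, ∑ b ∈ Word n 1, ∑ c ∈ Word n 1, Yc a S * Yc b S * Yc c S :=
          Finset.sum_comm
  rw [Ex_congr h, Ex_sum]
  refine Finset.sum_congr rfl fun a _ => ?_
  rw [Ex_sum]
  exact Finset.sum_congr rfl fun b _ => Ex_sum _ _

lemma g3_iso_a {a b c : Wd n} (h1 : Disjoint (cube a) (cube b))
    (h2 : Disjoint (cube a) (cube c)) : g3 a b c = 0 := by
  have hd : Disjoint (cube a) (cube b ∪ cube c) :=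
    Finset.disjoint_union_right.mpr ⟨h1, h2⟩
  have hpt : ∀ S, Yc a S * Yc b S * Yc c S = Yc a S * (Yc b S * Yc c S) := fun S => by ring
  unfold g3
  rw [Ex_congr hpt]
  have h := indep hd (meas_Yc a) ((meas_Yc b).mul (meas_Yc c))
  rw [Ex_Yc, zero_mul] at h
  exact h

lemma g3_iso_b {a b c : Wd n} (h1 : Disjoint (cube a) (cube b))
    (h2 : Disjoint (cube b) (cube c)) : g3 a b c = 0 := by
  have hd : Disjoint (cube b) (cube a ∪ cube c) :=
    Finset.disjoint_union_right.mpr ⟨h1.symm, h2⟩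
  have hpt : ∀ S, Yc a S * Yc b S * Yc c S = Yc b S * (Yc a S * Yc c S) := fun S => by ring
  unfold g3
  rw [Ex_congr hpt]
  have h := indep hd (meas_Yc b) ((meas_Yc a).mul (meas_Yc c))
  rw [Ex_Yc, zero_mul] at h
  exact h

lemma g3_iso_c {a b c : Wd n} (h1 : Disjoint (cube a) (cube c))
    (h2 : Disjoint (cube b) (cube c)) : g3 a b c = 0 := by
  have hd : Disjoint (cube c) (cube a ∪ cube b) :=
    Finset.disjoint_union_right.mpr ⟨h1.symm, h2.symm⟩
  have hpt : ∀ S, Yc a S * Yc b S * Yc c S = Yc c S * (Yc a S * Yc b S) := fun S => by ring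
  unfold g3
  rw [Ex_congr hpt]
  have h := indep hd (meas_Yc c) ((meas_Yc a).mul (meas_Yc b))
  rw [Ex_Yc, zero_mul] at h
  exact h

lemma g3_ptwise (a b c : Wd n) :
    |g3 a b c| ≤ Ind (dp a b ∧ dp a c) + Ind (dp a b ∧ dp b c) + Ind (dp a c ∧ dp b c) := by
  have hb := g3_abs_le a b c
  have i1 := @Ind_nonneg (dp a b ∧ dp a c) _
  have i2 := @Ind_nonneg (dp a b ∧ dp b c) _
  have i3 := @Ind_nonneg (dp a c ∧ dp b c) _
  by_cases h1 : dp a b <;> by_cases h2 : dp a c <;> by_cases h3 : dp b c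
  · linarith [Ind_of_true (⟨h1, h2⟩ : dp a b ∧ dp a c)]
  · linarith [Ind_of_true (⟨h1, h2⟩ : dp a b ∧ dp a c)]
  · linarith [Ind_of_true (⟨h1, h3⟩ : dp a b ∧ dp b c)]
  · rw [g3_iso_c (of_not_not h2) (of_not_not h3)]
    simp only [abs_zero]
    linarith
  · linarith [Ind_of_true (⟨h2, h3⟩ : dp a c ∧ dp b c)]
  · rw [g3_iso_b (of_not_not h1) (of_not_not h3)]
    simp only [abs_zero]
    linarith
  · rw [g3_iso_a (of_not_not h1) (of_not_not h2)]
    simp only [abs_zero]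
    linarith
  · rw [g3_iso_a (of_not_not h1) (of_not_not h2)]
    simp only [abs_zero]
    linarith

lemma Ind_and (P Q : Prop) [Decidable P] [Decidable Q] :
    Ind (P ∧ Q) = Ind P * Ind Q := by
  simp only [Ind]
  split_ifs <;> first | (exfalso; tauto) | norm_num

lemma canon3 (v : Wd n → Wd n → Wd n)
    (hv : ∀ a b, a ∈ Word n 1 → b ∈ Word n 1 → v a b ∈ Word n 1) :
    ∑ a ∈ Word n 1, ∑ b ∈ Word n 1, ∑ c ∈ Word n 1, Ind (dp a b) * Ind (dp (v a b) c)
      ≤ 4 * (n:ℝ)^3 * 2^n := by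
  have h2n : (0:ℝ) ≤ 2 * n := by positivity
  calc ∑ a ∈ Word n 1, ∑ b ∈ Word n 1, ∑ c ∈ Word n 1, Ind (dp a b) * Ind (dp (v a b) c)
      ≤ ∑ a ∈ Word n 1, ∑ b ∈ Word n 1, Ind (dp a b) * (2*n) := by
        refine Finset.sum_le_sum fun a ha => Finset.sum_le_sum fun b hb => ?_
        rw [← Finset.mul_sum]
        exact mul_le_mul_of_nonneg_left (nbr_sum (hv a b ha hb)) Ind_nonneg
    _ ≤ ∑ a ∈ Word n 1, (2*(n:ℝ)) * (2*n) := by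
        refine Finset.sum_le_sum fun a ha => ?_
        rw [← Finset.sum_mul]
        exact mul_le_mul_of_nonneg_right (nbr_sum ha) h2n
    _ = (∑ _a ∈ Word n 1, (1:ℝ)) * ((2*n) * (2*n)) := by
        rw [Finset.sum_mul]
        simp
    _ ≤ ((n:ℝ) * 2^n) * ((2*n) * (2*n)) := by
        apply mul_le_mul_of_nonneg_right W_sum_one (by positivity)
    _ = 4 * (n:ℝ)^3 * 2^n := by ring

lemma count_p1 : ∑ a ∈ Word n 1, ∑ b ∈ Word n 1, ∑ c ∈ Word n 1, Ind (dp a b ∧ dp a c)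
    ≤ 4 * (n:ℝ)^3 * 2^n := by
  have h := canon3 (n := n) (fun a _ => a) (fun a b ha _hb => ha)
  calc ∑ a ∈ Word n 1, ∑ b ∈ Word n 1, ∑ c ∈ Word n 1, Ind (dp a b ∧ dp a c)
      = ∑ a ∈ Word n 1, ∑ b ∈ Word n 1, ∑ c ∈ Word n 1, Ind (dp a b) * Ind (dp a c) := by
        refine Finset.sum_congr rfl fun a _ => Finset.sum_congr rfl fun b _ =>
          Finset.sum_congr rfl fun c _ => Ind_and _ _
    _ ≤ 4 * (n:ℝ)^3 * 2^n := h

lemma count_p2 : ∑ a ∈ Word n 1, ∑ b ∈ Word n 1, ∑ c ∈ Word n 1, Ind (dp a b ∧ dp b c)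
    ≤ 4 * (n:ℝ)^3 * 2^n := by
  have h := canon3 (n := n) (fun _ b => b) (fun a b _ha hb => hb)
  calc ∑ a ∈ Word n 1, ∑ b ∈ Word n 1, ∑ c ∈ Word n 1, Ind (dp a b ∧ dp b c)
      = ∑ a ∈ Word n 1, ∑ b ∈ Word n 1, ∑ c ∈ Word n 1, Ind (dp a b) * Ind (dp b c) := by
        refine Finset.sum_congr rfl fun a _ => Finset.sum_congr rfl fun b _ =>
          Finset.sum_congr rfl fun c _ => Ind_and _ _
    _ ≤ 4 * (n:ℝ)^3 * 2^n := h

lemma count_p3 : ∑ a ∈ Word n 1, ∑ b ∈ Word n 1, ∑ c ∈ Word n 1, Ind (dp a c ∧ dp b c)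
    ≤ 4 * (n:ℝ)^3 * 2^n := by
  have h := canon3 (n := n) (fun _ b => b) (fun a b _ha hb => hb)
  calc ∑ a ∈ Word n 1, ∑ b ∈ Word n 1, ∑ c ∈ Word n 1, Ind (dp a c ∧ dp b c)
      = ∑ a ∈ Word n 1, ∑ c ∈ Word n 1, ∑ b ∈ Word n 1, Ind (dp a c ∧ dp b c) := by
        exact Finset.sum_congr rfl fun a _ => Finset.sum_comm
    _ = ∑ a ∈ Word n 1, ∑ c ∈ Word n 1, ∑ b ∈ Word n 1, Ind (dp a c) * Ind (dp c b) := by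
        refine Finset.sum_congr rfl fun a _ => Finset.sum_congr rfl fun c _ =>
          Finset.sum_congr rfl fun b _ => ?_
        rw [Ind_and]
        congr 1
        exact Ind_congr dp_symm
    _ ≤ 4 * (n:ℝ)^3 * 2^n := h

lemma mu3_abs_le : |Ex n (fun S => ((Xr n 1 S : ℝ) - mean1 n)^3)| ≤ 12 * (n:ℝ)^3 * 2^n := by
  rw [mu3_eq]
  have step : |∑ a ∈ Word n 1, ∑ b ∈ Word n 1, ∑ c ∈ Word n 1, g3 a b c|
      ≤ ∑ a ∈ Word n 1, ∑ b ∈ Word n 1, ∑ c ∈ Word n 1, |g3 a b c| := by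
    calc |∑ a ∈ Word n 1, ∑ b ∈ Word n 1, ∑ c ∈ Word n 1, g3 a b c|
        ≤ ∑ a ∈ Word n 1, |∑ b ∈ Word n 1, ∑ c ∈ Word n 1, g3 a b c| :=
          Finset.abs_sum_le_sum_abs _ _
      _ ≤ ∑ a ∈ Word n 1, ∑ b ∈ Word n 1, |∑ c ∈ Word n 1, g3 a b c| :=
          Finset.sum_le_sum fun a _ => Finset.abs_sum_le_sum_abs _ _
      _ ≤ ∑ a ∈ Word n 1, ∑ b ∈ Word n 1, ∑ c ∈ Word n 1, |g3 a b c| :=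
          Finset.sum_le_sum fun a _ => Finset.sum_le_sum fun b _ =>
            Finset.abs_sum_le_sum_abs _ _
  calc |∑ a ∈ Word n 1, ∑ b ∈ Word n 1, ∑ c ∈ Word n 1, g3 a b c|
      ≤ ∑ a ∈ Word n 1, ∑ b ∈ Word n 1, ∑ c ∈ Word n 1, |g3 a b c| := step
    _ ≤ ∑ a ∈ Word n 1, ∑ b ∈ Word n 1, ∑ c ∈ Word n 1,
          (Ind (dp a b ∧ dp a c) + Ind (dp a b ∧ dp b c) + Ind (dp a c ∧ dp b c)) := by
        refine Finset.sum_le_sum fun a _ => Finset.sum_le_sum fun b _ =>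
          Finset.sum_le_sum fun c _ => g3_ptwise a b c
    _ = (∑ a ∈ Word n 1, ∑ b ∈ Word n 1, ∑ c ∈ Word n 1, Ind (dp a b ∧ dp a c))
        + (∑ a ∈ Word n 1, ∑ b ∈ Word n 1, ∑ c ∈ Word n 1, Ind (dp a b ∧ dp b c))
        + (∑ a ∈ Word n 1, ∑ b ∈ Word n 1, ∑ c ∈ Word n 1, Ind (dp a c ∧ dp b c)) := by
        simp only [Finset.sum_add_distrib]
    _ ≤ 4 * (n:ℝ)^3 * 2^n + 4 * (n:ℝ)^3 * 2^n + 4 * (n:ℝ)^3 * 2^n := by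
        have := @count_p1 n
        have := @count_p2 n
        have := @count_p3 n
        linarith
    _ = 12 * (n:ℝ)^3 * 2^n := by ring

/-! ### Fourth moment: setup -/

def g4 (a b c d : Wd n) : ℝ := Ex n (fun S => Yc a S * Yc b S * Yc c S * Yc d S)

lemma g4_abs_le (a b c d : Wd n) : |g4 a b c d| ≤ 1 :=
  Ex_abs_le 1 fun S => by
    rw [abs_mul, abs_mul, abs_mul]
    exact mul_le_one₀ (mul_le_one₀ (mul_le_one₀ (Yc_abs_le a S) (abs_nonneg _)
      (Yc_abs_le b S)) (abs_nonneg _) (Yc_abs_le c S)) (abs_nonneg _) (Yc_abs_le d S)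

lemma mu4_eq : Ex n (fun S => ((Xr n 1 S : ℝ) - mean1 n)^4)
    = ∑ a ∈ Word n 1, ∑ b ∈ Word n 1, ∑ c ∈ Word n 1, ∑ d ∈ Word n 1, g4 a b c d := by
  have h : ∀ S : Finset (Pt n), ((Xr n 1 S : ℝ) - mean1 n)^4
      = ∑ a ∈ Word n 1, ∑ b ∈ Word n 1, ∑ c ∈ Word n 1, ∑ d ∈ Word n 1,
          Yc a S * Yc b S * Yc c S * Yc d S := by
    intro S
    rw [X_sub_mean]
    calc (∑ w ∈ Word n 1, Yc w S)^4
        = (∑ a ∈ Word n 1, Yc a S) * (∑ b ∈ Word n 1, Yc b S)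
          * (∑ c ∈ Word n 1, Yc c S) * (∑ d ∈ Word n 1, Yc d S) := by ring
      _ = ∑ d ∈ Word n 1, ∑ c ∈ Word n 1, ∑ b ∈ Word n 1, ∑ a ∈ Word n 1,
            Yc a S * Yc b S * Yc c S * Yc d S := by
          simp only [Finset.sum_mul, Finset.mul_sum]
      _ = ∑ d ∈ Word n 1, ∑ c ∈ Word n 1, ∑ a ∈ Word n 1, ∑ b ∈ Word n 1,
            Yc a S * Yc b S * Yc c S * Yc d S :=
          Finset.sum_congr rfl fun d _ => Finset.sum_congr rfl fun c _ => Finset.sum_comm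
      _ = ∑ d ∈ Word n 1, ∑ a ∈ Word n 1, ∑ c ∈ Word n 1, ∑ b ∈ Word n 1,
            Yc a S * Yc b S * Yc c S * Yc d S :=
          Finset.sum_congr rfl fun d _ => Finset.sum_comm
      _ = ∑ a ∈ Word n 1, ∑ d ∈ Word n 1, ∑ c ∈ Word n 1, ∑ b ∈ Word n 1,
            Yc a S * Yc b S * Yc c S * Yc d S := Finset.sum_comm
      _ = ∑ a ∈ Word n 1, ∑ d ∈ Word n 1, ∑ b ∈ Word n 1, ∑ c ∈ Word n 1,
            Yc a S * Yc b S * Yc c S * Yc d S :=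
          Finset.sum_congr rfl fun a _ => Finset.sum_congr rfl fun d _ => Finset.sum_comm
      _ = ∑ a ∈ Word n 1, ∑ b ∈ Word n 1, ∑ d ∈ Word n 1, ∑ c ∈ Word n 1,
            Yc a S * Yc b S * Yc c S * Yc d S :=
          Finset.sum_congr rfl fun a _ => Finset.sum_comm
      _ = ∑ a ∈ Word n 1, ∑ b ∈ Word n 1, ∑ c ∈ Word n 1, ∑ d ∈ Word n 1,
            Yc a S * Yc b S * Yc c S * Yc d S :=
          Finset.sum_congr rfl fun a _ => Finset.sum_congr rfl fun b _ => Finset.sum_comm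
  rw [Ex_congr h, Ex_sum]
  refine Finset.sum_congr rfl fun a _ => ?_
  rw [Ex_sum]
  refine Finset.sum_congr rfl fun b _ => ?_
  rw [Ex_sum]
  exact Finset.sum_congr rfl fun c _ => Ex_sum _ _

lemma swapBC {α : Type*} (s : Finset α) (f : α → α → α → α → ℝ) :
    ∑ a ∈ s, ∑ b ∈ s, ∑ c ∈ s, ∑ d ∈ s, f a b c d
      = ∑ a ∈ s, ∑ b ∈ s, ∑ c ∈ s, ∑ d ∈ s, f a c b d :=
  Finset.sum_congr rfl fun a _ => Finset.sum_comm

lemma swapCD {α : Type*} (s : Finset α) (f : α → α → α → α → ℝ) :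
    ∑ a ∈ s, ∑ b ∈ s, ∑ c ∈ s, ∑ d ∈ s, f a b c d
      = ∑ a ∈ s, ∑ b ∈ s, ∑ c ∈ s, ∑ d ∈ s, f a b d c :=
  Finset.sum_congr rfl fun a _ => Finset.sum_congr rfl fun b _ => Finset.sum_comm

lemma swapBD {α : Type*} (s : Finset α) (f : α → α → α → α → ℝ) :
    ∑ a ∈ s, ∑ b ∈ s, ∑ c ∈ s, ∑ d ∈ s, f a b c d
      = ∑ a ∈ s, ∑ b ∈ s, ∑ c ∈ s, ∑ d ∈ s, f a d c b := by
  calc ∑ a ∈ s, ∑ b ∈ s, ∑ c ∈ s, ∑ d ∈ s, f a b c d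
      = ∑ a ∈ s, ∑ b ∈ s, ∑ c ∈ s, ∑ d ∈ s, f a b d c := swapCD s f
    _ = ∑ a ∈ s, ∑ b ∈ s, ∑ c ∈ s, ∑ d ∈ s, f a c d b := swapBC s _
    _ = ∑ a ∈ s, ∑ b ∈ s, ∑ c ∈ s, ∑ d ∈ s, f a d c b := swapCD s _

/-! ### g4 vanishing and splitting -/

lemma g4_iso_a {a b c d : Wd n} (h2 : Disjoint (cube a) (cube b))
    (h3 : Disjoint (cube a) (cube c)) (h4 : Disjoint (cube a) (cube d)) :
    g4 a b c d = 0 := by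
  have hd : Disjoint (cube a) (cube b ∪ (cube c ∪ cube d)) :=
    Finset.disjoint_union_right.mpr ⟨h2, Finset.disjoint_union_right.mpr ⟨h3, h4⟩⟩
  have hpt : ∀ S, Yc a S * Yc b S * Yc c S * Yc d S
      = Yc a S * (Yc b S * (Yc c S * Yc d S)) := fun S => by ring
  unfold g4
  rw [Ex_congr hpt]
  have h := indep hd (meas_Yc a) ((meas_Yc b).mul ((meas_Yc c).mul (meas_Yc d)))
  rw [Ex_Yc, zero_mul] at h
  exact h

lemma g4_iso_b {a b c d : Wd n} (h2 : Disjoint (cube a) (cube b))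
    (h3 : Disjoint (cube b) (cube c)) (h4 : Disjoint (cube b) (cube d)) :
    g4 a b c d = 0 := by
  have hd : Disjoint (cube b) (cube a ∪ (cube c ∪ cube d)) :=
    Finset.disjoint_union_right.mpr ⟨h2.symm, Finset.disjoint_union_right.mpr ⟨h3, h4⟩⟩
  have hpt : ∀ S, Yc a S * Yc b S * Yc c S * Yc d S
      = Yc b S * (Yc a S * (Yc c S * Yc d S)) := fun S => by ring
  unfold g4
  rw [Ex_congr hpt]
  have h := indep hd (meas_Yc b) ((meas_Yc a).mul ((meas_Yc c).mul (meas_Yc d)))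
  rw [Ex_Yc, zero_mul] at h
  exact h

lemma g4_iso_c {a b c d : Wd n} (h2 : Disjoint (cube a) (cube c))
    (h3 : Disjoint (cube b) (cube c)) (h4 : Disjoint (cube c) (cube d)) :
    g4 a b c d = 0 := by
  have hd : Disjoint (cube c) (cube a ∪ (cube b ∪ cube d)) :=
    Finset.disjoint_union_right.mpr ⟨h2.symm, Finset.disjoint_union_right.mpr ⟨h3.symm, h4⟩⟩
  have hpt : ∀ S, Yc a S * Yc b S * Yc c S * Yc d S
      = Yc c S * (Yc a S * (Yc b S * Yc d S)) := fun S => by ring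
  unfold g4
  rw [Ex_congr hpt]
  have h := indep hd (meas_Yc c) ((meas_Yc a).mul ((meas_Yc b).mul (meas_Yc d)))
  rw [Ex_Yc, zero_mul] at h
  exact h

lemma g4_iso_d {a b c d : Wd n} (h2 : Disjoint (cube a) (cube d))
    (h3 : Disjoint (cube b) (cube d)) (h4 : Disjoint (cube c) (cube d)) :
    g4 a b c d = 0 := by
  have hd : Disjoint (cube d) (cube a ∪ (cube b ∪ cube c)) :=
    Finset.disjoint_union_right.mpr ⟨h2.symm, Finset.disjoint_union_right.mpr ⟨h3.symm, h4.symm⟩⟩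
  have hpt : ∀ S, Yc a S * Yc b S * Yc c S * Yc d S
      = Yc d S * (Yc a S * (Yc b S * Yc c S)) := fun S => by ring
  unfold g4
  rw [Ex_congr hpt]
  have h := indep hd (meas_Yc d) ((meas_Yc a).mul ((meas_Yc b).mul (meas_Yc c)))
  rw [Ex_Yc, zero_mul] at h
  exact h

lemma g4_split_ab_cd {a b c d : Wd n} (h13 : Disjoint (cube a) (cube c))
    (h14 : Disjoint (cube a) (cube d)) (h23 : Disjoint (cube b) (cube c))
    (h24 : Disjoint (cube b) (cube d)) : g4 a b c d = ee a b * ee c d := by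
  have hd : Disjoint (cube a ∪ cube b) (cube c ∪ cube d) := by
    rw [Finset.disjoint_union_left]
    exact ⟨Finset.disjoint_union_right.mpr ⟨h13, h14⟩,
      Finset.disjoint_union_right.mpr ⟨h23, h24⟩⟩
  have hpt : ∀ S, Yc a S * Yc b S * Yc c S * Yc d S
      = (Yc a S * Yc b S) * (Yc c S * Yc d S) := fun S => by ring
  unfold g4
  rw [Ex_congr hpt]
  exact indep hd ((meas_Yc a).mul (meas_Yc b)) ((meas_Yc c).mul (meas_Yc d))

lemma g4_split_ac_bd {a b c d : Wd n} (h12 : Disjoint (cube a) (cube b))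
    (h14 : Disjoint (cube a) (cube d)) (h23 : Disjoint (cube b) (cube c))
    (h34 : Disjoint (cube c) (cube d)) : g4 a b c d = ee a c * ee b d := by
  have hd : Disjoint (cube a ∪ cube c) (cube b ∪ cube d) := by
    rw [Finset.disjoint_union_left]
    exact ⟨Finset.disjoint_union_right.mpr ⟨h12, h14⟩,
      Finset.disjoint_union_right.mpr ⟨h23.symm, h34⟩⟩
  have hpt : ∀ S, Yc a S * Yc b S * Yc c S * Yc d S
      = (Yc a S * Yc c S) * (Yc b S * Yc d S) := fun S => by ring
  unfold g4
  rw [Ex_congr hpt]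
  exact indep hd ((meas_Yc a).mul (meas_Yc c)) ((meas_Yc b).mul (meas_Yc d))

lemma g4_split_ad_bc {a b c d : Wd n} (h12 : Disjoint (cube a) (cube b))
    (h13 : Disjoint (cube a) (cube c)) (h24 : Disjoint (cube b) (cube d))
    (h34 : Disjoint (cube c) (cube d)) : g4 a b c d = ee a d * ee b c := by
  have hd : Disjoint (cube a ∪ cube d) (cube b ∪ cube c) := by
    rw [Finset.disjoint_union_left]
    exact ⟨Finset.disjoint_union_right.mpr ⟨h12, h13⟩,
      Finset.disjoint_union_right.mpr ⟨h24.symm, h34.symm⟩⟩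
  have hpt : ∀ S, Yc a S * Yc b S * Yc c S * Yc d S
      = (Yc a S * Yc d S) * (Yc b S * Yc c S) := fun S => by ring
  unfold g4
  rw [Ex_congr hpt]
  exact indep hd ((meas_Yc a).mul (meas_Yc d)) ((meas_Yc b).mul (meas_Yc c))

/-! ### canonical count for quadruples -/

lemma canon4 (v3 : Wd n → Wd n → Wd n) (v4 : Wd n → Wd n → Wd n → Wd n)
    (hv3 : ∀ a b, a ∈ Word n 1 → b ∈ Word n 1 → v3 a b ∈ Word n 1)
    (hv4 : ∀ a b c, a ∈ Word n 1 → b ∈ Word n 1 → c ∈ Word n 1 → v4 a b c ∈ Word n 1) :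
    ∑ a ∈ Word n 1, ∑ b ∈ Word n 1, ∑ c ∈ Word n 1, ∑ d ∈ Word n 1,
        Ind (dp a b) * Ind (dp (v3 a b) c) * Ind (dp (v4 a b c) d)
      ≤ 8 * (n:ℝ)^4 * 2^n := by
  have h2n : (0:ℝ) ≤ 2 * n := by positivity
  calc ∑ a ∈ Word n 1, ∑ b ∈ Word n 1, ∑ c ∈ Word n 1, ∑ d ∈ Word n 1,
        Ind (dp a b) * Ind (dp (v3 a b) c) * Ind (dp (v4 a b c) d)
      ≤ ∑ a ∈ Word n 1, ∑ b ∈ Word n 1, ∑ c ∈ Word n 1,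
          Ind (dp a b) * Ind (dp (v3 a b) c) * (2*n) := by
        refine Finset.sum_le_sum fun a ha => Finset.sum_le_sum fun b hb =>
          Finset.sum_le_sum fun c hc => ?_
        rw [← Finset.mul_sum]
        exact mul_le_mul_of_nonneg_left (nbr_sum (hv4 a b c ha hb hc))
          (mul_nonneg Ind_nonneg Ind_nonneg)
    _ ≤ ∑ a ∈ Word n 1, ∑ b ∈ Word n 1, Ind (dp a b) * (2*(n:ℝ)) * (2*n) := by
        refine Finset.sum_le_sum fun a ha => Finset.sum_le_sum fun b hb => ?_
        have hre : ∀ c, Ind (dp a b) * Ind (dp (v3 a b) c) * (2*(n:ℝ))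
            = (Ind (dp a b) * (2*(n:ℝ))) * Ind (dp (v3 a b) c) := fun c => by ring
        rw [Finset.sum_congr rfl fun c _ => hre c, ← Finset.mul_sum]
        calc (Ind (dp a b) * (2*(n:ℝ))) * ∑ c ∈ Word n 1, Ind (dp (v3 a b) c)
            ≤ (Ind (dp a b) * (2*(n:ℝ))) * (2*n) :=
              mul_le_mul_of_nonneg_left (nbr_sum (hv3 a b ha hb))
                (mul_nonneg Ind_nonneg h2n)
          _ = Ind (dp a b) * (2*(n:ℝ)) * (2*n) := by ring
    _ ≤ ∑ a ∈ Word n 1, (2*(n:ℝ)) * (2*n) * (2*n) := by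
        refine Finset.sum_le_sum fun a ha => ?_
        have hre : ∀ b, Ind (dp a b) * (2*(n:ℝ)) * (2*n)
            = ((2*(n:ℝ)) * (2*n)) * Ind (dp a b) := fun b => by ring
        rw [Finset.sum_congr rfl fun b _ => hre b, ← Finset.mul_sum]
        calc ((2*(n:ℝ)) * (2*n)) * ∑ b ∈ Word n 1, Ind (dp a b)
            ≤ ((2*(n:ℝ)) * (2*n)) * (2*n) :=
              mul_le_mul_of_nonneg_left (nbr_sum ha) (by positivity)
          _ = (2*(n:ℝ)) * (2*n) * (2*n) := by ring
    _ = (∑ _a ∈ Word n 1, (1:ℝ)) * ((2*(n:ℝ)) * (2*n) * (2*n)) := by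
        rw [Finset.sum_mul]
        simp
    _ ≤ ((n:ℝ) * 2^n) * ((2*(n:ℝ)) * (2*n) * (2*n)) :=
        mul_le_mul_of_nonneg_right W_sum_one (by positivity)
    _ = 8 * (n:ℝ)^4 * 2^n := by ring

lemma classify4 (p12 p13 p14 p23 p24 p34 : Prop)
    [Decidable p12] [Decidable p13] [Decidable p14]
    [Decidable p23] [Decidable p24] [Decidable p34] :
    (¬p12 ∧ ¬p13 ∧ ¬p14) ∨
    (¬p12 ∧ ¬p23 ∧ ¬p24) ∨
    (¬p13 ∧ ¬p23 ∧ ¬p34) ∨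
    (¬p14 ∧ ¬p24 ∧ ¬p34) ∨
    (p12 ∧ p34 ∧ ¬p13 ∧ ¬p14 ∧ ¬p23 ∧ ¬p24) ∨
    (p13 ∧ p24 ∧ ¬p12 ∧ ¬p14 ∧ ¬p23 ∧ ¬p34) ∨
    (p14 ∧ p23 ∧ ¬p12 ∧ ¬p13 ∧ ¬p24 ∧ ¬p34) ∨
    (p12 ∧ p13 ∧ p14) ∨
    (p12 ∧ p23 ∧ p24) ∨
    (p13 ∧ p23 ∧ p34) ∨
    (p14 ∧ p24 ∧ p34) ∨
    (p12 ∧ p23 ∧ p34) ∨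
    (p12 ∧ p24 ∧ p34) ∨
    (p13 ∧ p23 ∧ p24) ∨
    (p13 ∧ p34 ∧ p24) ∨
    (p14 ∧ p24 ∧ p23) ∨
    (p14 ∧ p34 ∧ p23) ∨
    (p12 ∧ p13 ∧ p34) ∨
    (p12 ∧ p14 ∧ p34) ∨
    (p23 ∧ p13 ∧ p14) ∨
    (p24 ∧ p14 ∧ p13) ∨
    (p13 ∧ p12 ∧ p24) ∨
    (p23 ∧ p12 ∧ p14) := by
  by_cases h12 : p12 <;> by_cases h13 : p13 <;> by_cases h14 : p14 <;>
    by_cases h23 : p23 <;> by_cases h24 : p24 <;> by_cases h34 : p34 <;>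
    simp_all


lemma count_T1 :
    ∑ a ∈ Word n 1, ∑ b ∈ Word n 1, ∑ c ∈ Word n 1, ∑ d ∈ Word n 1,
        Ind (dp a b ∧ dp a c ∧ dp a d) ≤ 8 * (n:ℝ)^4 * 2^n := by
  refine le_trans (le_of_eq ?_)
    (canon4 (n := n) (fun a _ => a) (fun a _ _ => a)
      (fun a b ha _ => ha) (fun a b c ha _ _ => ha))
  refine Finset.sum_congr rfl fun w1 _ => Finset.sum_congr rfl fun w2 _ =>
    Finset.sum_congr rfl fun w3 _ => Finset.sum_congr rfl fun w4 _ => ?_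
  rw [Ind_and, Ind_and]
  ring

lemma count_T2 :
    ∑ a ∈ Word n 1, ∑ b ∈ Word n 1, ∑ c ∈ Word n 1, ∑ d ∈ Word n 1,
        Ind (dp a b ∧ dp b c ∧ dp b d) ≤ 8 * (n:ℝ)^4 * 2^n := by
  refine le_trans (le_of_eq ?_)
    (canon4 (n := n) (fun _ b => b) (fun _ b _ => b)
      (fun a b _ hb => hb) (fun a b c _ hb _ => hb))
  refine Finset.sum_congr rfl fun w1 _ => Finset.sum_congr rfl fun w2 _ =>
    Finset.sum_congr rfl fun w3 _ => Finset.sum_congr rfl fun w4 _ => ?_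
  rw [Ind_and, Ind_and]
  ring

lemma count_T3 :
    ∑ a ∈ Word n 1, ∑ b ∈ Word n 1, ∑ c ∈ Word n 1, ∑ d ∈ Word n 1,
        Ind (dp a c ∧ dp b c ∧ dp c d) ≤ 8 * (n:ℝ)^4 * 2^n := by
  rw [swapBC]
  refine le_trans (le_of_eq ?_)
    (canon4 (n := n) (fun _ b => b) (fun _ b _ => b)
      (fun a b _ hb => hb) (fun a b c _ hb _ => hb))
  refine Finset.sum_congr rfl fun w1 _ => Finset.sum_congr rfl fun w2 _ =>
    Finset.sum_congr rfl fun w3 _ => Finset.sum_congr rfl fun w4 _ => ?_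
  rw [Ind_and, Ind_and, 
    show Ind (dp w3 w2) = Ind (dp w2 w3) from Ind_congr dp_symm]
  ring

lemma count_T4 :
    ∑ a ∈ Word n 1, ∑ b ∈ Word n 1, ∑ c ∈ Word n 1, ∑ d ∈ Word n 1,
        Ind (dp a d ∧ dp b d ∧ dp c d) ≤ 8 * (n:ℝ)^4 * 2^n := by
  rw [swapCD]
  rw [swapBC]
  refine le_trans (le_of_eq ?_)
    (canon4 (n := n) (fun _ b => b) (fun _ b _ => b)
      (fun a b _ hb => hb) (fun a b c _ hb _ => hb))
  refine Finset.sum_congr rfl fun w1 _ => Finset.sum_congr rfl fun w2 _ =>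
    Finset.sum_congr rfl fun w3 _ => Finset.sum_congr rfl fun w4 _ => ?_
  rw [Ind_and, Ind_and, 
    show Ind (dp w3 w2) = Ind (dp w2 w3) from Ind_congr dp_symm, 
    show Ind (dp w4 w2) = Ind (dp w2 w4) from Ind_congr dp_symm]
  ring

lemma count_T5 :
    ∑ a ∈ Word n 1, ∑ b ∈ Word n 1, ∑ c ∈ Word n 1, ∑ d ∈ Word n 1,
        Ind (dp a b ∧ dp b c ∧ dp c d) ≤ 8 * (n:ℝ)^4 * 2^n := by
  refine le_trans (le_of_eq ?_)
    (canon4 (n := n) (fun _ b => b) (fun _ _ c => c)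
      (fun a b _ hb => hb) (fun a b c _ _ hc => hc))
  refine Finset.sum_congr rfl fun w1 _ => Finset.sum_congr rfl fun w2 _ =>
    Finset.sum_congr rfl fun w3 _ => Finset.sum_congr rfl fun w4 _ => ?_
  rw [Ind_and, Ind_and]
  ring

lemma count_T6 :
    ∑ a ∈ Word n 1, ∑ b ∈ Word n 1, ∑ c ∈ Word n 1, ∑ d ∈ Word n 1,
        Ind (dp a b ∧ dp b d ∧ dp c d) ≤ 8 * (n:ℝ)^4 * 2^n := by
  rw [swapCD]
  refine le_trans (le_of_eq ?_)
    (canon4 (n := n) (fun _ b => b) (fun _ _ c => c)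
      (fun a b _ hb => hb) (fun a b c _ _ hc => hc))
  refine Finset.sum_congr rfl fun w1 _ => Finset.sum_congr rfl fun w2 _ =>
    Finset.sum_congr rfl fun w3 _ => Finset.sum_congr rfl fun w4 _ => ?_
  rw [Ind_and, Ind_and, 
    show Ind (dp w4 w3) = Ind (dp w3 w4) from Ind_congr dp_symm]
  ring

lemma count_T7 :
    ∑ a ∈ Word n 1, ∑ b ∈ Word n 1, ∑ c ∈ Word n 1, ∑ d ∈ Word n 1,
        Ind (dp a c ∧ dp b c ∧ dp b d) ≤ 8 * (n:ℝ)^4 * 2^n := by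
  rw [swapBC]
  refine le_trans (le_of_eq ?_)
    (canon4 (n := n) (fun _ b => b) (fun _ _ c => c)
      (fun a b _ hb => hb) (fun a b c _ _ hc => hc))
  refine Finset.sum_congr rfl fun w1 _ => Finset.sum_congr rfl fun w2 _ =>
    Finset.sum_congr rfl fun w3 _ => Finset.sum_congr rfl fun w4 _ => ?_
  rw [Ind_and, Ind_and, 
    show Ind (dp w3 w2) = Ind (dp w2 w3) from Ind_congr dp_symm]
  ring

lemma count_T8 :
    ∑ a ∈ Word n 1, ∑ b ∈ Word n 1, ∑ c ∈ Word n 1, ∑ d ∈ Word n 1,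
        Ind (dp a c ∧ dp c d ∧ dp b d) ≤ 8 * (n:ℝ)^4 * 2^n := by
  rw [swapBC]
  rw [swapCD]
  refine le_trans (le_of_eq ?_)
    (canon4 (n := n) (fun _ b => b) (fun _ _ c => c)
      (fun a b _ hb => hb) (fun a b c _ _ hc => hc))
  refine Finset.sum_congr rfl fun w1 _ => Finset.sum_congr rfl fun w2 _ =>
    Finset.sum_congr rfl fun w3 _ => Finset.sum_congr rfl fun w4 _ => ?_
  rw [Ind_and, Ind_and, 
    show Ind (dp w4 w3) = Ind (dp w3 w4) from Ind_congr dp_symm]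
  ring

lemma count_T9 :
    ∑ a ∈ Word n 1, ∑ b ∈ Word n 1, ∑ c ∈ Word n 1, ∑ d ∈ Word n 1,
        Ind (dp a d ∧ dp b d ∧ dp b c) ≤ 8 * (n:ℝ)^4 * 2^n := by
  rw [swapCD]
  rw [swapBC]
  refine le_trans (le_of_eq ?_)
    (canon4 (n := n) (fun _ b => b) (fun _ _ c => c)
      (fun a b _ hb => hb) (fun a b c _ _ hc => hc))
  refine Finset.sum_congr rfl fun w1 _ => Finset.sum_congr rfl fun w2 _ =>
    Finset.sum_congr rfl fun w3 _ => Finset.sum_congr rfl fun w4 _ => ?_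
  rw [Ind_and, Ind_and, 
    show Ind (dp w3 w2) = Ind (dp w2 w3) from Ind_congr dp_symm]
  ring

lemma count_T10 :
    ∑ a ∈ Word n 1, ∑ b ∈ Word n 1, ∑ c ∈ Word n 1, ∑ d ∈ Word n 1,
        Ind (dp a d ∧ dp c d ∧ dp b c) ≤ 8 * (n:ℝ)^4 * 2^n := by
  rw [swapBD]
  refine le_trans (le_of_eq ?_)
    (canon4 (n := n) (fun _ b => b) (fun _ _ c => c)
      (fun a b _ hb => hb) (fun a b c _ _ hc => hc))
  refine Finset.sum_congr rfl fun w1 _ => Finset.sum_congr rfl fun w2 _ =>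
    Finset.sum_congr rfl fun w3 _ => Finset.sum_congr rfl fun w4 _ => ?_
  rw [Ind_and, Ind_and, 
    show Ind (dp w3 w2) = Ind (dp w2 w3) from Ind_congr dp_symm, 
    show Ind (dp w4 w3) = Ind (dp w3 w4) from Ind_congr dp_symm]
  ring

lemma count_T11 :
    ∑ a ∈ Word n 1, ∑ b ∈ Word n 1, ∑ c ∈ Word n 1, ∑ d ∈ Word n 1,
        Ind (dp a b ∧ dp a c ∧ dp c d) ≤ 8 * (n:ℝ)^4 * 2^n := by
  refine le_trans (le_of_eq ?_)
    (canon4 (n := n) (fun a _ => a) (fun _ _ c => c)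
      (fun a b ha _ => ha) (fun a b c _ _ hc => hc))
  refine Finset.sum_congr rfl fun w1 _ => Finset.sum_congr rfl fun w2 _ =>
    Finset.sum_congr rfl fun w3 _ => Finset.sum_congr rfl fun w4 _ => ?_
  rw [Ind_and, Ind_and]
  ring

lemma count_T12 :
    ∑ a ∈ Word n 1, ∑ b ∈ Word n 1, ∑ c ∈ Word n 1, ∑ d ∈ Word n 1,
        Ind (dp a b ∧ dp a d ∧ dp c d) ≤ 8 * (n:ℝ)^4 * 2^n := by
  rw [swapCD]
  refine le_trans (le_of_eq ?_)
    (canon4 (n := n) (fun a _ => a) (fun _ _ c => c)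
      (fun a b ha _ => ha) (fun a b c _ _ hc => hc))
  refine Finset.sum_congr rfl fun w1 _ => Finset.sum_congr rfl fun w2 _ =>
    Finset.sum_congr rfl fun w3 _ => Finset.sum_congr rfl fun w4 _ => ?_
  rw [Ind_and, Ind_and, 
    show Ind (dp w4 w3) = Ind (dp w3 w4) from Ind_congr dp_symm]
  ring

lemma count_T13 :
    ∑ a ∈ Word n 1, ∑ b ∈ Word n 1, ∑ c ∈ Word n 1, ∑ d ∈ Word n 1,
        Ind (dp b c ∧ dp a c ∧ dp a d) ≤ 8 * (n:ℝ)^4 * 2^n := by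
  rw [swapBC]
  refine le_trans (le_of_eq ?_)
    (canon4 (n := n) (fun _ b => b) (fun a _ _ => a)
      (fun a b _ hb => hb) (fun a b c ha _ _ => ha))
  refine Finset.sum_congr rfl fun w1 _ => Finset.sum_congr rfl fun w2 _ =>
    Finset.sum_congr rfl fun w3 _ => Finset.sum_congr rfl fun w4 _ => ?_
  rw [Ind_and, Ind_and, 
    show Ind (dp w3 w2) = Ind (dp w2 w3) from Ind_congr dp_symm]
  ring

lemma count_T14 :
    ∑ a ∈ Word n 1, ∑ b ∈ Word n 1, ∑ c ∈ Word n 1, ∑ d ∈ Word n 1,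
        Ind (dp b d ∧ dp a d ∧ dp a c) ≤ 8 * (n:ℝ)^4 * 2^n := by
  rw [swapBC]
  rw [swapCD]
  refine le_trans (le_of_eq ?_)
    (canon4 (n := n) (fun a _ => a) (fun _ _ c => c)
      (fun a b ha _ => ha) (fun a b c _ _ hc => hc))
  refine Finset.sum_congr rfl fun w1 _ => Finset.sum_congr rfl fun w2 _ =>
    Finset.sum_congr rfl fun w3 _ => Finset.sum_congr rfl fun w4 _ => ?_
  rw [Ind_and, Ind_and, 
    show Ind (dp w4 w3) = Ind (dp w3 w4) from Ind_congr dp_symm]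
  ring

lemma count_T15 :
    ∑ a ∈ Word n 1, ∑ b ∈ Word n 1, ∑ c ∈ Word n 1, ∑ d ∈ Word n 1,
        Ind (dp a c ∧ dp a b ∧ dp b d) ≤ 8 * (n:ℝ)^4 * 2^n := by
  refine le_trans (le_of_eq ?_)
    (canon4 (n := n) (fun a _ => a) (fun _ b _ => b)
      (fun a b ha _ => ha) (fun a b c _ hb _ => hb))
  refine Finset.sum_congr rfl fun w1 _ => Finset.sum_congr rfl fun w2 _ =>
    Finset.sum_congr rfl fun w3 _ => Finset.sum_congr rfl fun w4 _ => ?_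
  rw [Ind_and, Ind_and]
  ring

lemma count_T16 :
    ∑ a ∈ Word n 1, ∑ b ∈ Word n 1, ∑ c ∈ Word n 1, ∑ d ∈ Word n 1,
        Ind (dp b c ∧ dp a b ∧ dp a d) ≤ 8 * (n:ℝ)^4 * 2^n := by
  refine le_trans (le_of_eq ?_)
    (canon4 (n := n) (fun _ b => b) (fun a _ _ => a)
      (fun a b _ hb => hb) (fun a b c ha _ _ => ha))
  refine Finset.sum_congr rfl fun w1 _ => Finset.sum_congr rfl fun w2 _ =>
    Finset.sum_congr rfl fun w3 _ => Finset.sum_congr rfl fun w4 _ => ?_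
  rw [Ind_and, Ind_and]
  ring

lemma h_bound (a b c d : Wd n) :
    |g4 a b c d - ee a b * ee c d - ee a c * ee b d - ee a d * ee b c|
      ≤ 4 * (Ind (dp a b ∧ dp a c ∧ dp a d)
        + Ind (dp a b ∧ dp b c ∧ dp b d)
        + Ind (dp a c ∧ dp b c ∧ dp c d)
        + Ind (dp a d ∧ dp b d ∧ dp c d)
        + Ind (dp a b ∧ dp b c ∧ dp c d)
        + Ind (dp a b ∧ dp b d ∧ dp c d)
        + Ind (dp a c ∧ dp b c ∧ dp b d)
        + Ind (dp a c ∧ dp c d ∧ dp b d)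
        + Ind (dp a d ∧ dp b d ∧ dp b c)
        + Ind (dp a d ∧ dp c d ∧ dp b c)
        + Ind (dp a b ∧ dp a c ∧ dp c d)
        + Ind (dp a b ∧ dp a d ∧ dp c d)
        + Ind (dp b c ∧ dp a c ∧ dp a d)
        + Ind (dp b d ∧ dp a d ∧ dp a c)
        + Ind (dp a c ∧ dp a b ∧ dp b d)
        + Ind (dp b c ∧ dp a b ∧ dp a d)) := by
  have habs : |g4 a b c d - ee a b * ee c d - ee a c * ee b d - ee a d * ee b c| ≤ 4 := by
    have h1 := abs_le.mp (g4_abs_le a b c d)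
    have h2 : |ee a b * ee c d| ≤ 1 := by
      rw [abs_mul]; exact mul_le_one₀ (ee_abs_le _ _) (abs_nonneg _) (ee_abs_le _ _)
    have h3 : |ee a c * ee b d| ≤ 1 := by
      rw [abs_mul]; exact mul_le_one₀ (ee_abs_le _ _) (abs_nonneg _) (ee_abs_le _ _)
    have h4 : |ee a d * ee b c| ≤ 1 := by
      rw [abs_mul]; exact mul_le_one₀ (ee_abs_le _ _) (abs_nonneg _) (ee_abs_le _ _)
    have h2' := abs_le.mp h2
    have h3' := abs_le.mp h3
    have h4' := abs_le.mp h4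
    rw [abs_le]
    constructor <;> [linarith [h1.1, h2'.2, h3'.2, h4'.2]; linarith [h1.2, h2'.1, h3'.1, h4'.1]]
  have i1 : (0:ℝ) ≤ Ind (dp a b ∧ dp a c ∧ dp a d) := Ind_nonneg
  have i2 : (0:ℝ) ≤ Ind (dp a b ∧ dp b c ∧ dp b d) := Ind_nonneg
  have i3 : (0:ℝ) ≤ Ind (dp a c ∧ dp b c ∧ dp c d) := Ind_nonneg
  have i4 : (0:ℝ) ≤ Ind (dp a d ∧ dp b d ∧ dp c d) := Ind_nonneg
  have i5 : (0:ℝ) ≤ Ind (dp a b ∧ dp b c ∧ dp c d) := Ind_nonneg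
  have i6 : (0:ℝ) ≤ Ind (dp a b ∧ dp b d ∧ dp c d) := Ind_nonneg
  have i7 : (0:ℝ) ≤ Ind (dp a c ∧ dp b c ∧ dp b d) := Ind_nonneg
  have i8 : (0:ℝ) ≤ Ind (dp a c ∧ dp c d ∧ dp b d) := Ind_nonneg
  have i9 : (0:ℝ) ≤ Ind (dp a d ∧ dp b d ∧ dp b c) := Ind_nonneg
  have i10 : (0:ℝ) ≤ Ind (dp a d ∧ dp c d ∧ dp b c) := Ind_nonneg
  have i11 : (0:ℝ) ≤ Ind (dp a b ∧ dp a c ∧ dp c d) := Ind_nonneg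
  have i12 : (0:ℝ) ≤ Ind (dp a b ∧ dp a d ∧ dp c d) := Ind_nonneg
  have i13 : (0:ℝ) ≤ Ind (dp b c ∧ dp a c ∧ dp a d) := Ind_nonneg
  have i14 : (0:ℝ) ≤ Ind (dp b d ∧ dp a d ∧ dp a c) := Ind_nonneg
  have i15 : (0:ℝ) ≤ Ind (dp a c ∧ dp a b ∧ dp b d) := Ind_nonneg
  have i16 : (0:ℝ) ≤ Ind (dp b c ∧ dp a b ∧ dp a d) := Ind_nonneg
  rcases classify4 (dp a b) (dp a c) (dp a d) (dp b c) (dp b d) (dp c d) with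
    h|h|h|h|h|h|h|h|h|h|h|h|h|h|h|h|h|h|h|h|h|h|h
  · obtain ⟨h1, h2, h3⟩ := h
    have hz : g4 a b c d - ee a b * ee c d - ee a c * ee b d - ee a d * ee b c = 0 := by
      rw [g4_iso_a (of_not_not h1) (of_not_not h2) (of_not_not h3),
          ee_zero (of_not_not h1), ee_zero (of_not_not h2), ee_zero (of_not_not h3)]
      ring
    rw [hz, abs_zero]
    linarith
  · obtain ⟨h1, h2, h3⟩ := h
    have hz : g4 a b c d - ee a b * ee c d - ee a c * ee b d - ee a d * ee b c = 0 := by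
      rw [g4_iso_b (of_not_not h1) (of_not_not h2) (of_not_not h3),
          ee_zero (of_not_not h1), ee_zero (of_not_not h3), ee_zero (of_not_not h2)]
      ring
    rw [hz, abs_zero]
    linarith
  · obtain ⟨h1, h2, h3⟩ := h
    have hz : g4 a b c d - ee a b * ee c d - ee a c * ee b d - ee a d * ee b c = 0 := by
      rw [g4_iso_c (of_not_not h1) (of_not_not h2) (of_not_not h3),
          ee_zero (of_not_not h3), ee_zero (of_not_not h1), ee_zero (of_not_not h2)]
      ring
    rw [hz, abs_zero]
    linarith
  · obtain ⟨h1, h2, h3⟩ := h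
    have hz : g4 a b c d - ee a b * ee c d - ee a c * ee b d - ee a d * ee b c = 0 := by
      rw [g4_iso_d (of_not_not h1) (of_not_not h2) (of_not_not h3),
          ee_zero (of_not_not h3), ee_zero (of_not_not h2), ee_zero (of_not_not h1)]
      ring
    rw [hz, abs_zero]
    linarith
  · obtain ⟨hA, hB, h3, h4, h5, h6⟩ := h
    have hz : g4 a b c d - ee a b * ee c d - ee a c * ee b d - ee a d * ee b c = 0 := by
      rw [g4_split_ab_cd (of_not_not h3) (of_not_not h4) (of_not_not h5) (of_not_not h6),
          ee_zero (of_not_not h3), ee_zero (of_not_not h4)]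
      ring
    rw [hz, abs_zero]
    linarith
  · obtain ⟨hA, hB, h3, h4, h5, h6⟩ := h
    have hz : g4 a b c d - ee a b * ee c d - ee a c * ee b d - ee a d * ee b c = 0 := by
      rw [g4_split_ac_bd (of_not_not h3) (of_not_not h4) (of_not_not h5) (of_not_not h6),
          ee_zero (of_not_not h3), ee_zero (of_not_not h4)]
      ring
    rw [hz, abs_zero]
    linarith
  · obtain ⟨hA, hB, h3, h4, h5, h6⟩ := h
    have hz : g4 a b c d - ee a b * ee c d - ee a c * ee b d - ee a d * ee b c = 0 := by
      rw [g4_split_ad_bc (of_not_not h3) (of_not_not h4) (of_not_not h5) (of_not_not h6),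
          ee_zero (of_not_not h3), ee_zero (of_not_not h4)]
      ring
    rw [hz, abs_zero]
    linarith
  · linarith [habs, Ind_of_true h]
  · linarith [habs, Ind_of_true h]
  · linarith [habs, Ind_of_true h]
  · linarith [habs, Ind_of_true h]
  · linarith [habs, Ind_of_true h]
  · linarith [habs, Ind_of_true h]
  · linarith [habs, Ind_of_true h]
  · linarith [habs, Ind_of_true h]
  · linarith [habs, Ind_of_true h]
  · linarith [habs, Ind_of_true h]
  · linarith [habs, Ind_of_true h]
  · linarith [habs, Ind_of_true h]
  · linarith [habs, Ind_of_true h]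
  · linarith [habs, Ind_of_true h]
  · linarith [habs, Ind_of_true h]
  · linarith [habs, Ind_of_true h]

lemma sum_ee_1 : ∑ a ∈ Word n 1, ∑ b ∈ Word n 1, ∑ c ∈ Word n 1, ∑ d ∈ Word n 1,
    ee a b * ee c d = var1 n * var1 n := by
  rw [var1_eq]
  simp only [← Finset.mul_sum, ← Finset.sum_mul]

lemma sum_ee_2 : ∑ a ∈ Word n 1, ∑ b ∈ Word n 1, ∑ c ∈ Word n 1, ∑ d ∈ Word n 1,
    ee a c * ee b d = var1 n * var1 n := by
  rw [var1_eq]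
  simp only [← Finset.mul_sum, ← Finset.sum_mul]

lemma sum_ee_3 : ∑ a ∈ Word n 1, ∑ b ∈ Word n 1, ∑ c ∈ Word n 1, ∑ d ∈ Word n 1,
    ee a d * ee b c = var1 n * var1 n := by
  rw [var1_eq]
  simp only [← Finset.mul_sum, ← Finset.sum_mul]

lemma mu4_dev : |Ex n (fun S => ((Xr n 1 S : ℝ) - mean1 n)^4) - 3 * (var1 n * var1 n)|
    ≤ 512 * (n:ℝ)^4 * 2^n := by
  rw [mu4_eq]
  have key : (∑ a ∈ Word n 1, ∑ b ∈ Word n 1, ∑ c ∈ Word n 1, ∑ d ∈ Word n 1,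
          g4 a b c d) - 3 * (var1 n * var1 n)
      = ∑ a ∈ Word n 1, ∑ b ∈ Word n 1, ∑ c ∈ Word n 1, ∑ d ∈ Word n 1,
          (g4 a b c d - ee a b * ee c d - ee a c * ee b d - ee a d * ee b c) := by
    simp only [Finset.sum_sub_distrib]
    rw [sum_ee_1, sum_ee_2, sum_ee_3]
    ring
  rw [key]
  calc |∑ a ∈ Word n 1, ∑ b ∈ Word n 1, ∑ c ∈ Word n 1, ∑ d ∈ Word n 1,
          (g4 a b c d - ee a b * ee c d - ee a c * ee b d - ee a d * ee b c)|
      ≤ ∑ a ∈ Word n 1, |∑ b ∈ Word n 1, ∑ c ∈ Word n 1, ∑ d ∈ Word n 1, (g4 a b c d - ee a b * ee c d - ee a c * ee b d - ee a d * ee b c)| :=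
        Finset.abs_sum_le_sum_abs _ _
    _ ≤ ∑ a ∈ Word n 1, ∑ b ∈ Word n 1, |∑ c ∈ Word n 1, ∑ d ∈ Word n 1, (g4 a b c d - ee a b * ee c d - ee a c * ee b d - ee a d * ee b c)| :=
        Finset.sum_le_sum fun a _ => Finset.abs_sum_le_sum_abs _ _
    _ ≤ ∑ a ∈ Word n 1, ∑ b ∈ Word n 1, ∑ c ∈ Word n 1, |∑ d ∈ Word n 1, (g4 a b c d - ee a b * ee c d - ee a c * ee b d - ee a d * ee b c)| :=
        Finset.sum_le_sum fun a _ => Finset.sum_le_sum fun b _ =>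
          Finset.abs_sum_le_sum_abs _ _
    _ ≤ ∑ a ∈ Word n 1, ∑ b ∈ Word n 1, ∑ c ∈ Word n 1, ∑ d ∈ Word n 1,
          |g4 a b c d - ee a b * ee c d - ee a c * ee b d - ee a d * ee b c| :=
        Finset.sum_le_sum fun a _ => Finset.sum_le_sum fun b _ =>
          Finset.sum_le_sum fun c _ => Finset.abs_sum_le_sum_abs _ _
    _ ≤ ∑ a ∈ Word n 1, ∑ b ∈ Word n 1, ∑ c ∈ Word n 1, ∑ d ∈ Word n 1,
          4 * (Ind (dp a b ∧ dp a c ∧ dp a d)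
            + Ind (dp a b ∧ dp b c ∧ dp b d)
            + Ind (dp a c ∧ dp b c ∧ dp c d)
            + Ind (dp a d ∧ dp b d ∧ dp c d)
            + Ind (dp a b ∧ dp b c ∧ dp c d)
            + Ind (dp a b ∧ dp b d ∧ dp c d)
            + Ind (dp a c ∧ dp b c ∧ dp b d)
            + Ind (dp a c ∧ dp c d ∧ dp b d)
            + Ind (dp a d ∧ dp b d ∧ dp b c)
            + Ind (dp a d ∧ dp c d ∧ dp b c)
            + Ind (dp a b ∧ dp a c ∧ dp c d)
            + Ind (dp a b ∧ dp a d ∧ dp c d)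
            + Ind (dp b c ∧ dp a c ∧ dp a d)
            + Ind (dp b d ∧ dp a d ∧ dp a c)
            + Ind (dp a c ∧ dp a b ∧ dp b d)
            + Ind (dp b c ∧ dp a b ∧ dp a d)) :=
        Finset.sum_le_sum fun a _ => Finset.sum_le_sum fun b _ =>
          Finset.sum_le_sum fun c _ => Finset.sum_le_sum fun d _ => h_bound a b c d
    _ = 4 * ((∑ a ∈ Word n 1, ∑ b ∈ Word n 1, ∑ c ∈ Word n 1, ∑ d ∈ Word n 1,
          Ind (dp a b ∧ dp a c ∧ dp a d))
          + (∑ a ∈ Word n 1, ∑ b ∈ Word n 1, ∑ c ∈ Word n 1, ∑ d ∈ Word n 1,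
          Ind (dp a b ∧ dp b c ∧ dp b d))
          + (∑ a ∈ Word n 1, ∑ b ∈ Word n 1, ∑ c ∈ Word n 1, ∑ d ∈ Word n 1,
          Ind (dp a c ∧ dp b c ∧ dp c d))
          + (∑ a ∈ Word n 1, ∑ b ∈ Word n 1, ∑ c ∈ Word n 1, ∑ d ∈ Word n 1,
          Ind (dp a d ∧ dp b d ∧ dp c d))
          + (∑ a ∈ Word n 1, ∑ b ∈ Word n 1, ∑ c ∈ Word n 1, ∑ d ∈ Word n 1,
          Ind (dp a b ∧ dp b c ∧ dp c d))
          + (∑ a ∈ Word n 1, ∑ b ∈ Word n 1, ∑ c ∈ Word n 1, ∑ d ∈ Word n 1,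
          Ind (dp a b ∧ dp b d ∧ dp c d))
          + (∑ a ∈ Word n 1, ∑ b ∈ Word n 1, ∑ c ∈ Word n 1, ∑ d ∈ Word n 1,
          Ind (dp a c ∧ dp b c ∧ dp b d))
          + (∑ a ∈ Word n 1, ∑ b ∈ Word n 1, ∑ c ∈ Word n 1, ∑ d ∈ Word n 1,
          Ind (dp a c ∧ dp c d ∧ dp b d))
          + (∑ a ∈ Word n 1, ∑ b ∈ Word n 1, ∑ c ∈ Word n 1, ∑ d ∈ Word n 1,
          Ind (dp a d ∧ dp b d ∧ dp b c))
          + (∑ a ∈ Word n 1, ∑ b ∈ Word n 1, ∑ c ∈ Word n 1, ∑ d ∈ Word n 1,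
          Ind (dp a d ∧ dp c d ∧ dp b c))
          + (∑ a ∈ Word n 1, ∑ b ∈ Word n 1, ∑ c ∈ Word n 1, ∑ d ∈ Word n 1,
          Ind (dp a b ∧ dp a c ∧ dp c d))
          + (∑ a ∈ Word n 1, ∑ b ∈ Word n 1, ∑ c ∈ Word n 1, ∑ d ∈ Word n 1,
          Ind (dp a b ∧ dp a d ∧ dp c d))
          + (∑ a ∈ Word n 1, ∑ b ∈ Word n 1, ∑ c ∈ Word n 1, ∑ d ∈ Word n 1,
          Ind (dp b c ∧ dp a c ∧ dp a d))
          + (∑ a ∈ Word n 1, ∑ b ∈ Word n 1, ∑ c ∈ Word n 1, ∑ d ∈ Word n 1,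
          Ind (dp b d ∧ dp a d ∧ dp a c))
          + (∑ a ∈ Word n 1, ∑ b ∈ Word n 1, ∑ c ∈ Word n 1, ∑ d ∈ Word n 1,
          Ind (dp a c ∧ dp a b ∧ dp b d))
          + (∑ a ∈ Word n 1, ∑ b ∈ Word n 1, ∑ c ∈ Word n 1, ∑ d ∈ Word n 1,
          Ind (dp b c ∧ dp a b ∧ dp a d))) := by
        simp only [Finset.sum_add_distrib, ← Finset.mul_sum]
    _ ≤ 4 * (16 * (8 * (n:ℝ)^4 * 2^n)) := by
        refine mul_le_mul_of_nonneg_left ?_ (by norm_num : (0:ℝ) ≤ 4)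
        linarith [@count_T1 n, @count_T2 n, @count_T3 n, @count_T4 n, @count_T5 n,
          @count_T6 n, @count_T7 n, @count_T8 n, @count_T9 n, @count_T10 n,
          @count_T11 n, @count_T12 n, @count_T13 n, @count_T14 n, @count_T15 n,
          @count_T16 n]
    _ = 512 * (n:ℝ)^4 * 2^n := by ring

/-! ### Final limits -/

lemma var1_ge' (hn : 2 ≤ n) : (n:ℝ)^2 * 2^n / 32 ≤ var1 n := by
  have h := @var1_ge n
  have h2 : (2:ℝ) ≤ (n:ℝ) := by exact_mod_cast hn
  have hp : (0:ℝ) < 2^n := pow_pos (by norm_num) _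
  have h3 : (0:ℝ) ≤ ((n:ℝ)*(n:ℝ) - 2*(n:ℝ)) * 2^n :=
    mul_nonneg (by nlinarith) (le_of_lt hp)
  nlinarith [h, h3]

lemma sqrt_two_pow (m : ℕ) : Real.sqrt (2^m) = (Real.sqrt 2)^m := by
  induction m with
  | zero => simp
  | succ k ih => rw [pow_succ, pow_succ, Real.sqrt_mul (by positivity), ih]

lemma limit3 : Filter.Tendsto
    (fun n => Ex n (fun S => ((Xr n 1 S : ℝ) - mean1 n) ^ 3) / var1 n ^ ((3 : ℝ) / 2))
    Filter.atTop (nhds 0) := by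
  have hr0 : (0:ℝ) ≤ (Real.sqrt 2)⁻¹ := by positivity
  have hr1 : (Real.sqrt 2)⁻¹ < 1 := by
    rw [inv_lt_one_iff₀]
    right
    rw [show (1:ℝ) = Real.sqrt 1 from Real.sqrt_one.symm]
    exact Real.sqrt_lt_sqrt (by norm_num) (by norm_num)
  have hB : Filter.Tendsto (fun n : ℕ => 384 * Real.sqrt 32 * ((Real.sqrt 2)⁻¹)^n)
      Filter.atTop (nhds 0) := by
    have := (tendsto_pow_atTop_nhds_zero_of_lt_one hr0 hr1).const_mul (384 * Real.sqrt 32)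
    simpa using this
  apply squeeze_zero_norm' ?_ hB
  rw [Filter.eventually_atTop]
  refine ⟨2, fun n hn => ?_⟩
  have h2 : (2:ℝ) ≤ (n:ℝ) := by exact_mod_cast hn
  have hn0 : (0:ℝ) < (n:ℝ) := by linarith
  have hp : (0:ℝ) < (2:ℝ)^n := pow_pos (by norm_num) _
  have hx0 : (0:ℝ) < (n:ℝ)^2*2^n/32 := by positivity
  have hvar := var1_ge' (n := n) hn
  have hvpos : 0 < var1 n := lt_of_lt_of_le hx0 hvar
  have hxr : ((n:ℝ)^2*2^n/32) ^ ((3:ℝ)/2) ≤ var1 n ^ ((3:ℝ)/2) :=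
    Real.rpow_le_rpow (le_of_lt hx0) hvar (by norm_num)
  have hxr0 : (0:ℝ) < ((n:ℝ)^2*2^n/32) ^ ((3:ℝ)/2) := Real.rpow_pos_of_pos hx0 _
  have hvr0 : (0:ℝ) < var1 n ^ ((3:ℝ)/2) := Real.rpow_pos_of_pos hvpos _
  have hmu3 := @mu3_abs_le n
  rw [Real.norm_eq_abs, abs_div, abs_of_pos hvr0]
  have hstep : |Ex n (fun S => ((Xr n 1 S : ℝ) - mean1 n) ^ 3)| / var1 n ^ ((3:ℝ)/2)
      ≤ (12 * (n:ℝ)^3 * 2^n) / (((n:ℝ)^2*2^n/32) ^ ((3:ℝ)/2)) :=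
    div_le_div₀ (by positivity) hmu3 hxr0 hxr
  refine le_trans hstep (le_of_eq ?_)
  have hkey : ((n:ℝ)^2*2^n/32) ^ ((3:ℝ)/2)
      = ((n:ℝ)^2*2^n/32) * Real.sqrt ((n:ℝ)^2*2^n/32) := by
    rw [show (3:ℝ)/2 = 1 + 1/2 by norm_num, Real.rpow_add hx0, Real.rpow_one,
      ← Real.sqrt_eq_rpow]
  have hs : Real.sqrt ((n:ℝ)^2*2^n/32) = (n:ℝ) * (Real.sqrt 2)^n / Real.sqrt 32 := by
    rw [Real.sqrt_div (by positivity), Real.sqrt_mul (by positivity),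
      Real.sqrt_sq (le_of_lt hn0), sqrt_two_pow]
  rw [hkey, hs]
  have hs2 : Real.sqrt 2 ≠ 0 := by positivity
  have hs32 : Real.sqrt 32 ≠ 0 := by positivity
  have hsp : (Real.sqrt 2)^n ≠ 0 := pow_ne_zero _ hs2
  have hn0' : (n:ℝ) ≠ 0 := ne_of_gt hn0
  have hp' : (2:ℝ)^n ≠ 0 := ne_of_gt hp
  rw [inv_pow]
  field_simp
  ring

lemma limit4 : Filter.Tendsto
    (fun n => Ex n (fun S => ((Xr n 1 S : ℝ) - mean1 n) ^ 4) / var1 n ^ 2)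
    Filter.atTop (nhds 3) := by
  rw [← tendsto_sub_nhds_zero_iff]
  have hB : Filter.Tendsto (fun n : ℕ => 524288 * ((2:ℝ)⁻¹)^n) Filter.atTop (nhds 0) := by
    have := (tendsto_pow_atTop_nhds_zero_of_lt_one (by norm_num : (0:ℝ) ≤ (2:ℝ)⁻¹)
      (by norm_num : ((2:ℝ)⁻¹) < 1)).const_mul (524288 : ℝ)
    simpa using this
  apply squeeze_zero_norm' ?_ hB
  rw [Filter.eventually_atTop]
  refine ⟨2, fun n hn => ?_⟩
  have h2 : (2:ℝ) ≤ (n:ℝ) := by exact_mod_cast hn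
  have hn0 : (0:ℝ) < (n:ℝ) := by linarith
  have hp : (0:ℝ) < (2:ℝ)^n := pow_pos (by norm_num) _
  have hx0 : (0:ℝ) < (n:ℝ)^2*2^n/32 := by positivity
  have hvar := var1_ge' (n := n) hn
  have hvpos : 0 < var1 n := lt_of_lt_of_le hx0 hvar
  have hv2 : (0:ℝ) < var1 n ^ 2 := pow_pos hvpos 2
  have heq : Ex n (fun S => ((Xr n 1 S : ℝ) - mean1 n) ^ 4) / var1 n ^ 2 - 3
      = (Ex n (fun S => ((Xr n 1 S : ℝ) - mean1 n) ^ 4) - 3 * (var1 n * var1 n))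
        / var1 n ^ 2 := by
    field_simp
  rw [heq, Real.norm_eq_abs, abs_div, abs_of_pos hv2]
  have hx2 : ((n:ℝ)^2*2^n/32)^2 ≤ var1 n ^ 2 := pow_le_pow_left₀ (le_of_lt hx0) hvar 2
  have hx20 : (0:ℝ) < ((n:ℝ)^2*2^n/32)^2 := by positivity
  have hstep : |Ex n (fun S => ((Xr n 1 S : ℝ) - mean1 n) ^ 4) - 3 * (var1 n * var1 n)|
        / var1 n ^ 2
      ≤ (512 * (n:ℝ)^4 * 2^n) / (((n:ℝ)^2*2^n/32)^2) :=
    div_le_div₀ (by positivity) (@mu4_dev n) hx20 hx2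
  refine le_trans hstep (le_of_eq ?_)
  have hn0' : (n:ℝ) ≠ 0 := ne_of_gt hn0
  have hp' : (2:ℝ)^n ≠ 0 := ne_of_gt hp
  rw [inv_pow]
  field_simp
  ring

end
end AM

/-- As `n → ∞`, the scaled third central moment of `X₁` tends to `0` and the
scaled fourth central moment tends to `3` (the corresponding normal moments). -/
theorem scaled_central_moments_X1 :
    Filter.Tendsto
        (fun n => Ex n (fun S => ((Xr n 1 S : ℝ) - mean1 n) ^ 3) / var1 n ^ ((3 : ℝ) / 2))
        Filter.atTop (nhds 0) ∧
    Filter.Tendsto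
        (fun n => Ex n (fun S => ((Xr n 1 S : ℝ) - mean1 n) ^ 4) / var1 n ^ 2)
        Filter.atTop (nhds 3) :=
  ⟨AM.limit3, AM.limit4⟩
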